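/- arXiv:2112.04727 — 6 statements merged into one kernel-verified Lean document; each statement's English description precedes it below -/
import Mathlib

section
/- Let T be a tree on a finite nonempty vertex type V with n = |V| vertices, and let m ≥ 1 be an integer. Let G be the Type-I growth graph of T with parameter m. Then the Wiener index of G satisfies W(G) = (m+1)^2·W(T) + m(m+1)·n^2 − m·n. -/
noncomputable def wienerIndex {V : Type*} [Fintype V] (G : SimpleGraph V) : ℚ :=
  (∑ u : V, ∑ v : V, (G.dist u v : ℚ)) / 2

def typeIGrowth {V : Type*} (T : SimpleGraph V) (m : ℕ) :
    SimpleGraph (V ⊕ (V × Fin m)) :=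
  SimpleGraph.fromRel (fun x y =>
    match x, y with
    | Sum.inl u, Sum.inl v => T.Adj u v
    | Sum.inl u, Sum.inr (v, _) => u = v
    | _, _ => False)

section Aux
variable {V : Type*} {m : ℕ} (T : SimpleGraph V)

lemma adj_inl_inl {u v : V} : (typeIGrowth T m).Adj (Sum.inl u) (Sum.inl v) ↔ T.Adj u v := by
  simp only [typeIGrowth, SimpleGraph.fromRel_adj]
  constructor
  · rintro ⟨-, h | h⟩
    · exact h
    · exact h.symm
  · intro h; exact ⟨by simpa using h.ne, Or.inl h⟩

lemma adj_inl_inr {u v : V} {i : Fin m} :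
    (typeIGrowth T m).Adj (Sum.inl u) (Sum.inr (v, i)) ↔ u = v := by
  simp [typeIGrowth, SimpleGraph.fromRel_adj]

lemma not_adj_inr_inr {p q : V × Fin m} :
    ¬ (typeIGrowth T m).Adj (Sum.inr p) (Sum.inr q) := by
  simp [typeIGrowth, SimpleGraph.fromRel_adj]

end Aux

section Dist
variable {V : Type*} {m : ℕ} {T : SimpleGraph V}

/-- Projection to the base vertex. -/
def gproj {V : Type*} {m : ℕ} : V ⊕ (V × Fin m) → V := Sum.elim id Prod.fst

def gwt {V : Type*} {m : ℕ} : V ⊕ (V × Fin m) → ℕ := Sum.elim (fun _ => 0) (fun _ => 1)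

open Classical in
noncomputable def gbnd (T : SimpleGraph V) (x y : V ⊕ (V × Fin m)) : ℕ :=
  if x = y then 0 else T.dist (gproj x) (gproj y) + gwt x + gwt y

lemma gbnd_self (x : V ⊕ (V × Fin m)) : gbnd T x x = 0 := by simp [gbnd]

lemma gbnd_le_one_of_adj {x y : V ⊕ (V × Fin m)}
    (h : (typeIGrowth T m).Adj x y) : gbnd T x y ≤ 1 := by
  rw [gbnd, if_neg h.ne]
  match x, y with
  | Sum.inl u, Sum.inl v =>
    have := (adj_inl_inl T).mp h
    simp [gproj, gwt, (SimpleGraph.dist_eq_one_iff_adj).mpr this]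
  | Sum.inl u, Sum.inr (v, i) =>
    have := (adj_inl_inr T).mp h
    subst this
    simp [gproj, gwt]
  | Sum.inr (u, i), Sum.inl v =>
    have := (adj_inl_inr T).mp h.symm
    subst this
    simp [gproj, gwt]
  | Sum.inr p, Sum.inr q => exact absurd h (not_adj_inr_inr T)

lemma gbnd_step (hc : T.Connected) {x z : V ⊕ (V × Fin m)} (y : V ⊕ (V × Fin m))
    (h : (typeIGrowth T m).Adj x z) (hxy : x ≠ y) :
    gbnd T x y ≤ 1 + gbnd T z y := by
  by_cases hzy : z = y
  · subst hzy
    exact (gbnd_le_one_of_adj h).trans (Nat.le_add_right 1 _)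
  rw [gbnd, if_neg hxy, gbnd, if_neg hzy]
  match x, z with
  | Sum.inl u, Sum.inl v =>
    have htri : T.dist u (gproj y) ≤ T.dist u v + T.dist v (gproj y) := hc.dist_triangle
    have h1 : T.dist u v = 1 := (SimpleGraph.dist_eq_one_iff_adj).mpr ((adj_inl_inl T).mp h)
    simp only [gproj, gwt, Sum.elim_inl, id_eq] at htri h1 ⊢
    omega
  | Sum.inl u, Sum.inr (v, i) =>
    have := (adj_inl_inr T).mp h
    subst this
    simp only [gproj, gwt, Sum.elim_inl, Sum.elim_inr, id_eq]
    omega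
  | Sum.inr (u, i), Sum.inl v =>
    have := (adj_inl_inr T).mp h.symm
    subst this
    simp only [gproj, gwt, Sum.elim_inl, Sum.elim_inr, id_eq]
    omega
  | Sum.inr p, Sum.inr q => exact absurd h (not_adj_inr_inr T)

lemma gbnd_le_walk_length (hc : T.Connected) {x y : V ⊕ (V × Fin m)}
    (p : (typeIGrowth T m).Walk x y) : gbnd T x y ≤ p.length := by
  induction p with
  | nil => simp [gbnd_self]
  | @cons a b c h q ih =>
    by_cases hac : a = c
    · have h0 : gbnd T a c = 0 := by rw [gbnd, if_pos hac]
      omega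
    · have := gbnd_step hc c h hac
      rw [SimpleGraph.Walk.length_cons]
      omega

def homInl {V : Type*} (T : SimpleGraph V) (m : ℕ) : T →g typeIGrowth T m where
  toFun := Sum.inl
  map_rel' := fun h => (adj_inl_inl T).mpr h

lemma exists_walk_gbnd (hc : T.Connected) (x y : V ⊕ (V × Fin m)) :
    ∃ p : (typeIGrowth T m).Walk x y, p.length = gbnd T x y := by
  rcases x with u | ⟨u, i⟩ <;> rcases y with v | ⟨v, j⟩
  · by_cases huv : u = v
    · subst huv; exact ⟨SimpleGraph.Walk.nil, by simp [gbnd_self]⟩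
    obtain ⟨q, hq⟩ := hc.exists_walk_length_eq_dist u v
    refine ⟨q.map (homInl T m), ?_⟩
    rw [gbnd, if_neg (by simp [huv])]
    simp [gproj, gwt, hq, SimpleGraph.Walk.length_map]
    exact (SimpleGraph.Walk.length_map _ _).trans hq
  · obtain ⟨q, hq⟩ := hc.exists_walk_length_eq_dist u v
    refine ⟨(q.map (homInl T m)).concat ((adj_inl_inr T).mpr rfl), ?_⟩
    rw [gbnd, if_neg (by simp)]
    simp [gproj, gwt, hq, SimpleGraph.Walk.length_concat, SimpleGraph.Walk.length_map]
    exact (SimpleGraph.Walk.length_concat _ _).trans (congrArg (· + 1) ((SimpleGraph.Walk.length_map _ _).trans hq))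
  · obtain ⟨q, hq⟩ := hc.exists_walk_length_eq_dist u v
    refine ⟨SimpleGraph.Walk.cons ((adj_inl_inr T).mpr rfl).symm (q.map (homInl T m)), ?_⟩
    rw [gbnd, if_neg (by simp)]
    simp [gproj, gwt, hq, SimpleGraph.Walk.length_map]
    exact (SimpleGraph.Walk.length_cons _ _).trans (congrArg (· + 1) ((SimpleGraph.Walk.length_map _ _).trans hq))
  · by_cases huv : (u, i) = (v, j)
    · rw [huv]; exact ⟨SimpleGraph.Walk.nil, by simp [gbnd_self]⟩
    obtain ⟨q, hq⟩ := hc.exists_walk_length_eq_dist u v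
    refine ⟨SimpleGraph.Walk.cons ((adj_inl_inr T).mpr rfl).symm
      ((q.map (homInl T m)).concat ((adj_inl_inr T).mpr rfl)), ?_⟩
    rw [gbnd, if_neg (by simp [huv])]
    simp [gproj, gwt, hq, SimpleGraph.Walk.length_concat, SimpleGraph.Walk.length_map]
    exact (SimpleGraph.Walk.length_cons _ _).trans (congrArg (· + 1) ((SimpleGraph.Walk.length_concat _ _).trans (congrArg (· + 1) ((SimpleGraph.Walk.length_map _ _).trans hq))))
    try omega

lemma dist_eq_gbnd (hc : T.Connected) (x y : V ⊕ (V × Fin m)) :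
    (typeIGrowth T m).dist x y = gbnd T x y := by
  obtain ⟨p, hp⟩ := exists_walk_gbnd hc x y
  refine le_antisymm (hp ▸ SimpleGraph.dist_le p) ?_
  obtain ⟨q, hq⟩ := p.reachable.exists_walk_length_eq_dist
  exact hq ▸ gbnd_le_walk_length hc q

end Dist

theorem wiener_typeIGrowth {V : Type*} [Fintype V] [Nonempty V]
    (T : SimpleGraph V) (hT : T.IsTree) (m : ℕ) (hm : 1 ≤ m) :
    wienerIndex (typeIGrowth T m) =
      ((m : ℚ) + 1) ^ 2 * wienerIndex T
        + (m : ℚ) * ((m : ℚ) + 1) * (Fintype.card V : ℚ) ^ 2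
        - (m : ℚ) * (Fintype.card V : ℚ) := by
  classical
  have hc : T.Connected := hT.isConnected
  set n : ℚ := (Fintype.card V : ℚ) with hn
  set S : ℚ := ∑ u : V, ∑ v : V, (T.dist u v : ℚ) with hSdef
  -- distance formulas
  have k1 : ∀ u v : V, ((typeIGrowth T m).dist (Sum.inl u) (Sum.inl v) : ℚ) = T.dist u v := by
    intro u v
    rw [dist_eq_gbnd hc, gbnd]
    by_cases h : u = v
    · subst h; simp [SimpleGraph.dist_self]
    · rw [if_neg (by simp [h])]; simp [gproj, gwt]
  have k2 : ∀ (u : V) (p : V × Fin m),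
      ((typeIGrowth T m).dist (Sum.inl u) (Sum.inr p) : ℚ) = (T.dist u p.1 : ℚ) + 1 := by
    intro u p
    rw [dist_eq_gbnd hc, gbnd, if_neg (by simp)]
    simp [gproj, gwt]
  have k3 : ∀ (p : V × Fin m) (v : V),
      ((typeIGrowth T m).dist (Sum.inr p) (Sum.inl v) : ℚ) = (T.dist p.1 v : ℚ) + 1 := by
    intro p v
    rw [dist_eq_gbnd hc, gbnd, if_neg (by simp)]
    simp [gproj, gwt]
  have k4 : ∀ (p q : V × Fin m),
      ((typeIGrowth T m).dist (Sum.inr p) (Sum.inr q) : ℚ)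
        = (T.dist p.1 q.1 : ℚ) + 2 - (if p = q then 2 else 0) := by
    intro p q
    rw [dist_eq_gbnd hc, gbnd]
    by_cases h : p = q
    · subst h; simp [SimpleGraph.dist_self]
    · rw [if_neg (by simp [h]), if_neg h]
      simp [gproj, gwt]
      ring
  -- block sums
  have hA : ∑ u : V, ∑ v : V, ((typeIGrowth T m).dist (Sum.inl u) (Sum.inl v) : ℚ) = S := by
    simp only [k1, hSdef]
  have hB : ∑ u : V, ∑ p : V × Fin m, ((typeIGrowth T m).dist (Sum.inl u) (Sum.inr p) : ℚ)
      = m * S + m * n ^ 2 := by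
    have e : ∑ u : V, ∑ p : V × Fin m, ((typeIGrowth T m).dist (Sum.inl u) (Sum.inr p) : ℚ)
        = ∑ u : V, ∑ v : V, ((m : ℚ) * (T.dist u v : ℚ) + m) := by
      simp only [k2, Fintype.sum_prod_type, Finset.sum_const, Finset.card_univ,
        Fintype.card_fin, nsmul_eq_mul]
      exact Finset.sum_congr rfl fun u _ => Finset.sum_congr rfl fun v _ => by ring
    rw [e]
    simp only [Finset.sum_add_distrib, Finset.sum_const, Finset.card_univ, nsmul_eq_mul,
      ← Finset.mul_sum]
    rw [hSdef, hn]; ring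
  have hC : ∑ p : V × Fin m, ∑ v : V, ((typeIGrowth T m).dist (Sum.inr p) (Sum.inl v) : ℚ)
      = m * S + m * n ^ 2 := by
    have e : ∑ p : V × Fin m, ∑ v : V, ((typeIGrowth T m).dist (Sum.inr p) (Sum.inl v) : ℚ)
        = ∑ u : V, ∑ v : V, ((m : ℚ) * (T.dist u v : ℚ) + m) := by
      simp only [k3, Fintype.sum_prod_type, Finset.sum_const, Finset.card_univ,
        Fintype.card_fin, nsmul_eq_mul, Finset.sum_add_distrib, ← Finset.mul_sum]
      rw [Finset.sum_comm]
      rw [Fintype.card_prod, Fintype.card_fin]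
      push_cast
      ring
    rw [e]
    simp only [Finset.sum_add_distrib, Finset.sum_const, Finset.card_univ, nsmul_eq_mul,
      ← Finset.mul_sum]
    rw [hSdef, hn]; ring
  have hD : ∑ p : V × Fin m, ∑ q : V × Fin m, ((typeIGrowth T m).dist (Sum.inr p) (Sum.inr q) : ℚ)
      = m ^ 2 * S + 2 * m ^ 2 * n ^ 2 - 2 * m * n := by
    have e1 : ∑ p : V × Fin m, ∑ q : V × Fin m, ((typeIGrowth T m).dist (Sum.inr p) (Sum.inr q) : ℚ)
        = (∑ p : V × Fin m, ∑ q : V × Fin m, ((T.dist p.1 q.1 : ℚ) + 2))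
          - ∑ p : V × Fin m, ∑ q : V × Fin m, (if p = q then (2:ℚ) else 0) := by
      rw [← Finset.sum_sub_distrib]
      refine Finset.sum_congr rfl fun p _ => ?_
      rw [← Finset.sum_sub_distrib]
      exact Finset.sum_congr rfl fun q _ => k4 p q
    have e2 : ∑ p : V × Fin m, ∑ q : V × Fin m, (if p = q then (2:ℚ) else 0) = 2 * m * n := by
      simp only [Finset.sum_ite_eq, Finset.mem_univ, if_true, Finset.sum_const,
        Finset.card_univ, Fintype.card_prod, Fintype.card_fin, nsmul_eq_mul]
      rw [hn]; push_cast; ring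
    have e3 : ∑ p : V × Fin m, ∑ q : V × Fin m, ((T.dist p.1 q.1 : ℚ) + 2)
        = m ^ 2 * S + 2 * m ^ 2 * n ^ 2 := by
      simp only [Fintype.sum_prod_type, Finset.sum_add_distrib, Finset.sum_const,
        Finset.card_univ, Fintype.card_fin, Fintype.card_prod, nsmul_eq_mul, ← Finset.mul_sum]
      rw [hSdef, hn]; push_cast; ring
    rw [e1, e2, e3]
  have htot : ∑ x : V ⊕ (V × Fin m), ∑ y : V ⊕ (V × Fin m),
      ((typeIGrowth T m).dist x y : ℚ)
      = (m + 1) ^ 2 * S + 2 * m * (m + 1) * n ^ 2 - 2 * m * n := by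
    simp only [Fintype.sum_sum_type, Finset.sum_add_distrib]
    rw [hA, hB, hC, hD]
    ring
  rw [wienerIndex, wienerIndex, htot]
  ring
end

section
/- Let T be a tree on a finite nonempty vertex type V with n = |V| vertices, and let L be the line graph of T, the simple graph whose vertices are the edges of T, with two distinct edges adjacent iff they share an endpoint. Then the Wiener index of L satisfies W(L) = W(T) − n(n−1)/2, i.e., W(L) = W(T) − C(n,2). -/
set_option linter.unusedSectionVars false
namespace WienerAux
open SimpleGraph Finset

open Classical in
noncomputable def ind (P : Prop) : ℕ := if P then 1 else 0

lemma ind_pos {P : Prop} (h : P) : ind P = 1 := by simp [ind, h]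
lemma ind_neg {P : Prop} (h : ¬P) : ind P = 0 := by simp [ind, h]
lemma ind_congr {P Q : Prop} (h : P ↔ Q) : ind P = ind Q := by
  by_cases hp : P
  · rw [ind_pos hp, ind_pos (h.mp hp)]
  · rw [ind_neg hp, ind_neg (fun q => hp (h.mpr q))]
lemma ind_or {P Q : Prop} (h : ¬(P ∧ Q)) : ind (P ∨ Q) = ind P + ind Q := by
  by_cases hp : P
  · have hq : ¬ Q := fun q => h ⟨hp, q⟩
    rw [ind_pos (Or.inl hp), ind_pos hp, ind_neg hq]
  · by_cases hq : Q
    · rw [ind_pos (Or.inr hq), ind_neg hp, ind_pos hq]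
    · rw [ind_neg (by tauto), ind_neg hp, ind_neg hq]
lemma ind_and (P Q : Prop) : ind (P ∧ Q) = ind P * ind Q := by
  by_cases hp : P <;> by_cases hq : Q
  · rw [ind_pos ⟨hp, hq⟩, ind_pos hp, ind_pos hq]
  · rw [ind_neg (fun h => hq h.2), ind_neg hq, mul_zero]
  · rw [ind_neg (fun h => hp h.1), ind_neg hp, zero_mul]
  · rw [ind_neg (fun h => hp h.1), ind_neg hp, zero_mul]

lemma sum_ind {α : Type*} (s : Finset α) (P : α → Prop) [DecidablePred P] :
    ∑ a ∈ s, ind (P a) = (s.filter P).card := by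
  rw [Finset.card_filter]
  refine Finset.sum_congr rfl fun a _ => ?_
  by_cases h : P a <;> simp [ind_pos, ind_neg, h]

variable {V : Type*} [DecidableEq V] {T : SimpleGraph V}

/-- The unique path between two vertices of a tree. -/
noncomputable def pth (hT : T.IsTree) (u v : V) : T.Walk u v :=
  (hT.existsUnique_path u v).choose

lemma pth_isPath (hT : T.IsTree) (u v : V) : (pth hT u v).IsPath :=
  (hT.existsUnique_path u v).choose_spec.1

lemma pth_unique (hT : T.IsTree) {u v : V} (p : T.Walk u v) (hp : p.IsPath) :
    p = pth hT u v :=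
  (hT.existsUnique_path u v).choose_spec.2 p hp

lemma pth_length (hT : T.IsTree) (u v : V) : (pth hT u v).length = T.dist u v := by
  obtain ⟨p, hp, hlen⟩ := hT.isConnected.exists_path_of_dist u v
  rw [← pth_unique hT p hp] at *
  exact hlen

lemma dist_split (hT : T.IsTree) {u v w : V} (hw : w ∈ (pth hT u v).support) :
    T.dist u w + T.dist w v ≤ T.dist u v := by
  have hspec := SimpleGraph.Walk.take_spec (pth hT u v) hw
  have hlen : ((pth hT u v).takeUntil w hw).length + ((pth hT u v).dropUntil w hw).length
      = T.dist u v := by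
    rw [← pth_length hT u v, ← SimpleGraph.Walk.length_append, hspec]
  calc T.dist u w + T.dist w v
      ≤ ((pth hT u v).takeUntil w hw).length + ((pth hT u v).dropUntil w hw).length :=
        Nat.add_le_add (SimpleGraph.dist_le _) (SimpleGraph.dist_le _)
    _ = T.dist u v := hlen

end WienerAux
set_option linter.unusedSectionVars false
namespace WienerAux2
open SimpleGraph Finset

variable {V : Type*} [DecidableEq V] {T : SimpleGraph V}

lemma reach_del_iff (T : SimpleGraph V) (g : Sym2 V) (u v : V) :
    (T \ fromEdgeSet {g}).Reachable u v ↔ ∃ p : T.Walk u v, g ∉ p.edges := by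
  constructor
  · rintro ⟨p⟩
    use p.map (Hom.ofLE (by simp))
    simp_rw [Walk.edges_map, List.mem_map, Hom.ofLE_apply, Sym2.map_id', id]
    rintro ⟨e, h, rfl⟩
    simpa using p.edges_subset_edgeSet h
  · rintro ⟨p, h⟩
    refine ⟨p.transfer _ fun e ep => ?_⟩
    simp only [edgeSet_sdiff, edgeSet_fromEdgeSet, edgeSet_sdiff_sdiff_isDiag, Set.mem_diff,
      Set.mem_singleton_iff]
    exact ⟨p.edges_subset_edgeSet ep, fun h' => h (h' ▸ ep)⟩

lemma pth_avoid_iff (hT : T.IsTree) (g : Sym2 V) (u v : V) :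
    g ∉ (WienerAux.pth hT u v).edges ↔ (T \ fromEdgeSet {g}).Reachable u v := by
  constructor
  · intro h
    exact (reach_del_iff T g u v).mpr ⟨_, h⟩
  · intro h
    obtain ⟨p, hp⟩ := (reach_del_iff T g u v).mp h
    have := WienerAux.pth_unique hT (p.toPath : T.Walk u v) (p.toPath).2
    rw [← this]
    exact fun hg => hp (Walk.edges_toPath_subset p hg)

variable {x y : V}

lemma bridge_not_reach (hT : T.IsTree) (hxy : T.Adj x y) :
    ¬ (T \ fromEdgeSet {s(x,y)}).Reachable x y :=
  ((isBridge_iff).mp ((isAcyclic_iff_forall_adj_isBridge.mp hT.2) hxy))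

lemma walk_mem_bridge (hT : T.IsTree) (hxy : T.Adj x y) {u v : V} (p : T.Walk u v)
    (hu : u = x ∨ u = y) (hv : v = x ∨ v = y) (huv : u ≠ v) : s(x,y) ∈ p.edges := by
  by_contra h
  have hr : (T \ fromEdgeSet {s(x,y)}).Reachable u v := (reach_del_iff T _ u v).mpr ⟨p, h⟩
  rcases hu with rfl | rfl <;> rcases hv with rfl | rfl
  · exact huv rfl
  · exact bridge_not_reach hT hxy hr
  · exact bridge_not_reach hT hxy hr.symm
  · exact huv rfl

lemma side_total (hT : T.IsTree) (hxy : T.Adj x y) (u : V) :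
    (T \ fromEdgeSet {s(x,y)}).Reachable u x ∨ (T \ fromEdgeSet {s(x,y)}).Reachable u y := by
  set g := s(x,y) with hg
  by_cases h : g ∈ (WienerAux.pth hT u x).edges
  · right
    set p := WienerAux.pth hT u x with hp
    have hy : y ∈ p.support := Walk.snd_mem_support_of_mem_edges p h
    have hspec := Walk.take_spec p hy
    have hnodup : p.edges.Nodup := (WienerAux.pth_isPath hT u x).isTrail.edges_nodup
    have hdrop : g ∈ (p.dropUntil y hy).edges :=
      walk_mem_bridge hT hxy _ (Or.inr rfl) (Or.inl rfl) hxy.ne.symm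
    have htake : g ∉ (p.takeUntil y hy).edges := by
      intro hg'
      have : p.edges = (p.takeUntil y hy).edges ++ (p.dropUntil y hy).edges := by
        rw [← Walk.edges_append, hspec]
      rw [this] at hnodup
      exact (List.disjoint_of_nodup_append hnodup) hg' hdrop
    exact (reach_del_iff T g u y).mpr ⟨_, htake⟩
  · left
    exact (reach_del_iff T g u x).mpr ⟨_, h⟩

lemma side_not_both (hT : T.IsTree) (hxy : T.Adj x y) (u : V) :
    ¬ ((T \ fromEdgeSet {s(x,y)}).Reachable u x ∧ (T \ fromEdgeSet {s(x,y)}).Reachable u y) := by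
  rintro ⟨h1, h2⟩
  exact bridge_not_reach hT hxy (h1.symm.trans h2)

lemma mem_pth_iff_not_reach (hT : T.IsTree) (g : Sym2 V) (u v : V) :
    g ∈ (WienerAux.pth hT u v).edges ↔ ¬ (T \ fromEdgeSet {g}).Reachable u v := by
  rw [← pth_avoid_iff hT g u v, not_not]

lemma cross_iff (hT : T.IsTree) (hxy : T.Adj x y) (u v : V) :
    ¬ (T \ fromEdgeSet {s(x,y)}).Reachable u v ↔
      (((T \ fromEdgeSet {s(x,y)}).Reachable u x ∧ (T \ fromEdgeSet {s(x,y)}).Reachable v y) ∨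
       ((T \ fromEdgeSet {s(x,y)}).Reachable u y ∧ (T \ fromEdgeSet {s(x,y)}).Reachable v x)) := by
  constructor
  · intro h
    rcases side_total hT hxy u with hu | hu <;> rcases side_total hT hxy v with hv | hv
    · exact absurd (hu.trans hv.symm) h
    · exact Or.inl ⟨hu, hv⟩
    · exact Or.inr ⟨hu, hv⟩
    · exact absurd (hu.trans hv.symm) h
  · rintro (⟨hu, hv⟩ | ⟨hu, hv⟩) hr
    · exact bridge_not_reach hT hxy ((hu.symm.trans hr).trans hv)
    · exact bridge_not_reach hT hxy ((hv.symm.trans hr.symm).trans hu)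

end WienerAux2
set_option linter.unusedSectionVars false
namespace WienerAux3
open SimpleGraph Finset WienerAux

variable {V : Type*} [DecidableEq V] {T : SimpleGraph V}

/-- Minimum distance between endpoints of two edges. -/
noncomputable def mm (T : SimpleGraph V) (e f : T.edgeSet) : ℕ :=
  sInf {k | ∃ u v : V, u ∈ (e : Sym2 V) ∧ v ∈ (f : Sym2 V) ∧ T.dist u v = k}

lemma mm_set_nonempty (e f : T.edgeSet) :
    {k | ∃ u v : V, u ∈ (e : Sym2 V) ∧ v ∈ (f : Sym2 V) ∧ T.dist u v = k}.Nonempty :=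
  ⟨_, (e : Sym2 V).out.1, (f : Sym2 V).out.1, Sym2.out_fst_mem _, Sym2.out_fst_mem _, rfl⟩

lemma mm_exists (e f : T.edgeSet) :
    ∃ u v : V, u ∈ (e : Sym2 V) ∧ v ∈ (f : Sym2 V) ∧ T.dist u v = mm T e f :=
  Nat.sInf_mem (mm_set_nonempty e f)

lemma mm_le {e f : T.edgeSet} {u v : V} (hu : u ∈ (e : Sym2 V)) (hv : v ∈ (f : Sym2 V)) :
    mm T e f ≤ T.dist u v :=
  Nat.sInf_le ⟨u, v, hu, hv, rfl⟩

lemma mm_self (e : T.edgeSet) : mm T e e = 0 := by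
  have h := mm_le (T := T) (Sym2.out_fst_mem (e : Sym2 V)) (Sym2.out_fst_mem (e : Sym2 V))
  rw [SimpleGraph.dist_self] at h
  omega

lemma dist_le_one_of_mem {ev : Sym2 V} (he : ev ∈ T.edgeSet) {a b : V}
    (ha : a ∈ ev) (hb : b ∈ ev) : T.dist a b ≤ 1 := by
  induction ev using Sym2.ind with
  | _ p q =>
    have hpq : T.Adj p q := he
    rw [Sym2.mem_iff] at ha hb
    rcases ha with rfl | rfl <;> rcases hb with rfl | rfl
    · rw [SimpleGraph.dist_self]; omega
    · exact le_of_eq (SimpleGraph.dist_eq_one_iff_adj.mpr hpq)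
    · exact le_of_eq (SimpleGraph.dist_eq_one_iff_adj.mpr hpq.symm)
    · rw [SimpleGraph.dist_self]; omega

lemma eq_of_two_mem {ev : Sym2 V} (he : ev ∈ T.edgeSet) {a b : V}
    (ha : a ∈ ev) (hb : b ∈ ev) (hab : a ≠ b) : ev = s(a, b) := by
  induction ev using Sym2.ind with
  | _ p q =>
    rw [Sym2.mem_iff] at ha hb
    rcases ha with rfl | rfl <;> rcases hb with rfl | rfl
    · exact absurd rfl hab
    · rfl
    · exact Sym2.eq_swap
    · exact absurd rfl hab

lemma line_lb (hT : T.IsTree) {e f : T.edgeSet} (w : T.lineGraph.Walk e f) (hne : e ≠ f) :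
    mm T e f + 1 ≤ w.length := by
  revert hne
  induction w with
  | nil => intro hne; exact absurd rfl hne
  | @cons e e' f h w ih =>
    intro _
    obtain ⟨hne', z, hz, hz'⟩ := lineGraph_adj_iff_exists.mp h
    by_cases hef : e' = f
    · subst hef
      have h0 : mm T e e' = 0 := by
        have := mm_le (T := T) hz hz'
        rw [SimpleGraph.dist_self] at this
        omega
      simp [Walk.length_cons, h0]
    · have hm := ih hef
      have hstep : mm T e f ≤ mm T e' f + 1 := by
        obtain ⟨u', v, hu', hv, hd⟩ := mm_exists e' f
        calc mm T e f ≤ T.dist z v := mm_le hz hv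
          _ ≤ T.dist z u' + T.dist u' v := hT.isConnected.dist_triangle
          _ ≤ 1 + mm T e' f := add_le_add (dist_le_one_of_mem e'.2 hz' hu') (le_of_eq hd)
          _ = mm T e' f + 1 := by ring
      simp only [Walk.length_cons]
      omega

lemma line_ub (hT : T.IsTree) : ∀ (k : ℕ) (e f : T.edgeSet), e ≠ f → mm T e f ≤ k →
    T.lineGraph.edist e f ≤ (mm T e f + 1 : ℕ) := by
  intro k
  induction k with
  | zero =>
    intro e f hne hle
    obtain ⟨u, v, hu, hv, hd⟩ := mm_exists e f
    have h0 : mm T e f = 0 := Nat.le_zero.mp hle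
    have huv : u = v := (hT.isConnected.dist_eq_zero_iff).mp (by omega)
    subst huv
    have hadj : T.lineGraph.Adj e f := lineGraph_adj_iff_exists.mpr ⟨hne, u, hu, hv⟩
    calc T.lineGraph.edist e f = 1 := SimpleGraph.edist_eq_one_iff_adj.mpr hadj
      _ ≤ (mm T e f + 1 : ℕ) := by exact_mod_cast Nat.succ_le_succ (Nat.zero_le _)
  | succ k IH =>
    intro e f hne hle
    obtain ⟨u, v, hu, hv, hd⟩ := mm_exists e f
    by_cases h0 : mm T e f = 0
    · have huv : u = v := (hT.isConnected.dist_eq_zero_iff).mp (by omega)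
      subst huv
      have hadj : T.lineGraph.Adj e f := lineGraph_adj_iff_exists.mpr ⟨hne, u, hu, hv⟩
      calc T.lineGraph.edist e f = 1 := SimpleGraph.edist_eq_one_iff_adj.mpr hadj
        _ ≤ (mm T e f + 1 : ℕ) := by exact_mod_cast Nat.succ_le_succ (Nat.zero_le _)
    · obtain ⟨m', hm'⟩ : ∃ m', mm T e f = m' + 1 := ⟨mm T e f - 1, by omega⟩
      obtain ⟨p, hp⟩ := (hT.isConnected u v).exists_walk_length_eq_dist
      cases p with
      | nil => rw [Walk.length_nil] at hp; omega
      | @cons _ u₁ _ hadj q =>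
        rw [Walk.length_cons] at hp
        have hd1 : T.dist u₁ v ≤ m' := by
          have := SimpleGraph.dist_le q
          omega
        have hd2 : T.dist u₁ v = m' := by
          have ht := hT.isConnected.dist_triangle (u := u) (v := u₁) (w := v)
          have h1 : T.dist u u₁ = 1 := SimpleGraph.dist_eq_one_iff_adj.mpr hadj
          omega
        set p₁ : T.edgeSet := ⟨s(u, u₁), hadj⟩ with hp₁
        have hne1 : e ≠ p₁ := by
          intro he
          have hu₁ : u₁ ∈ (e : Sym2 V) := by rw [he]; exact Sym2.mem_mk_right u u₁
          have := mm_le (T := T) hu₁ hv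
          omega
        have hadj1 : T.lineGraph.Adj e p₁ :=
          lineGraph_adj_iff_exists.mpr ⟨hne1, u, hu, Sym2.mem_mk_left u u₁⟩
        have he1 : T.lineGraph.edist e p₁ ≤ 1 :=
          le_of_eq (SimpleGraph.edist_eq_one_iff_adj.mpr hadj1)
        by_cases hpf : p₁ = f
        · subst hpf
          calc T.lineGraph.edist e p₁ ≤ 1 := he1
            _ ≤ (mm T e p₁ + 1 : ℕ) := by exact_mod_cast Nat.succ_le_succ (Nat.zero_le _)
        · have hmle : mm T p₁ f ≤ m' := by
            have := mm_le (T := T) (e := p₁) (f := f)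
              (show u₁ ∈ (p₁ : Sym2 V) from Sym2.mem_mk_right u u₁) hv
            omega
          have hIH := IH p₁ f hpf (by omega)
          calc T.lineGraph.edist e f ≤ T.lineGraph.edist e p₁ + T.lineGraph.edist p₁ f :=
                SimpleGraph.edist_triangle
            _ ≤ 1 + (mm T p₁ f + 1 : ℕ) := add_le_add he1 hIH
            _ ≤ 1 + (m' + 1 : ℕ) :=
                add_le_add le_rfl (by exact_mod_cast Nat.succ_le_succ hmle)
            _ = ((m' + 1) + 1 : ℕ) := by push_cast; ring
            _ = (mm T e f + 1 : ℕ) := by rw [hm']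

lemma line_dist (hT : T.IsTree) {e f : T.edgeSet} (hne : e ≠ f) :
    T.lineGraph.dist e f = mm T e f + 1 := by
  have hub := line_ub hT (mm T e f) e f hne le_rfl
  have hntop : T.lineGraph.edist e f ≠ ⊤ := by
    intro h
    rw [h] at hub
    exact (ENat.coe_ne_top _) (top_le_iff.mp hub)
  have hreach : T.lineGraph.Reachable e f := reachable_of_edist_ne_top hntop
  obtain ⟨w, hw⟩ := hreach.exists_walk_length_eq_dist
  have hlb : mm T e f + 1 ≤ T.lineGraph.dist e f := hw ▸ line_lb hT w hne
  have hub' : T.lineGraph.dist e f ≤ mm T e f + 1 := by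
    have : T.lineGraph.edist e f = (T.lineGraph.dist e f : ℕ∞) := by
      rw [SimpleGraph.dist]
      exact (ENat.coe_toNat hntop).symm
    rw [this] at hub
    exact_mod_cast hub
  omega

end WienerAux3
set_option linter.unusedSectionVars false
namespace WienerAux4
open SimpleGraph Finset WienerAux WienerAux2 WienerAux3

variable {V : Type*} [DecidableEq V] {T : SimpleGraph V}

lemma walk_first {G : SimpleGraph V} {u v : V} (p : G.Walk u v) (h : 0 < p.length) :
    G.Adj u (p.getVert 1) ∧ s(u, p.getVert 1) ∈ p.edges := by
  cases p with
  | nil => simp at h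
  | cons hadj q =>
    rw [Walk.getVert_cons_succ, Walk.getVert_zero]
    exact ⟨hadj, by simp [Walk.edges_cons]⟩

lemma pth_pos_length (hT : T.IsTree) {u v : V} (hne : u ≠ v) : 0 < (pth hT u v).length := by
  rw [pth_length]
  exact hT.isConnected.pos_dist_of_ne hne

lemma dist_dec (hT : T.IsTree) {u x : V} (hne : u ≠ x) :
    T.dist ((pth hT u x).getVert 1) x + 1 = T.dist u x := by
  obtain ⟨hadj, hmem⟩ := walk_first (pth hT u x) (pth_pos_length hT hne)
  set u₁ := (pth hT u x).getVert 1 with hu₁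
  have hsupp : u₁ ∈ (pth hT u x).support := Walk.snd_mem_support_of_mem_edges _ hmem
  have hsplit := dist_split hT hsupp
  have h1 : T.dist u u₁ = 1 := SimpleGraph.dist_eq_one_iff_adj.mpr hadj
  have htri := hT.isConnected.dist_triangle (u := u) (v := u₁) (w := x)
  omega

lemma adj_dist_cases (hT : T.IsTree) {c d : V} (hcd : T.Adj c d) (x : V) :
    T.dist c x = T.dist d x + 1 ∨ T.dist d x = T.dist c x + 1 := by
  have h1 : T.dist c d = 1 := SimpleGraph.dist_eq_one_iff_adj.mpr hcd
  have h2 : T.dist d c = 1 := SimpleGraph.dist_eq_one_iff_adj.mpr hcd.symm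
  have ht1 := hT.isConnected.dist_triangle (u := c) (v := d) (w := x)
  have ht2 := hT.isConnected.dist_triangle (u := d) (v := c) (w := x)
  have hne : T.dist c x ≠ T.dist d x := by
    intro heq
    by_cases hd : d ∈ (pth hT c x).support
    · have := dist_split hT hd
      omega
    · have hpath : (Walk.cons hcd.symm (pth hT c x)).IsPath :=
        (Walk.cons_isPath_iff _ _).mpr ⟨pth_isPath hT c x, hd⟩
      have huniq := pth_unique hT _ hpath
      have hlen := congrArg Walk.length huniq
      rw [Walk.length_cons, pth_length, pth_length] at hlen
      omega
  omega

lemma pth_first_vert (hT : T.IsTree) {c d x : V} (hcd : T.Adj c d)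
    (hdist : T.dist c x = T.dist d x + 1) : (pth hT c x).getVert 1 = d := by
  have hd : c ∉ (pth hT d x).support := by
    intro hc
    have hsplit := dist_split hT hc
    have h1 : T.dist d c = 1 := SimpleGraph.dist_eq_one_iff_adj.mpr hcd.symm
    omega
  have hpath : (Walk.cons hcd (pth hT d x)).IsPath :=
    (Walk.cons_isPath_iff _ _).mpr ⟨pth_isPath hT d x, hd⟩
  have huniq := pth_unique hT _ hpath
  rw [← huniq, Walk.getVert_cons_succ, Walk.getVert_zero]

variable [Fintype V]

open Classical in
/-- the set of vertices on the `x`-side of the edge `s(x,y)`. -/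
noncomputable def sideA (T : SimpleGraph V) (x y : V) : Finset V :=
  univ.filter (fun u => (T \ fromEdgeSet {s(x,y)}).Reachable u x)

lemma mem_sideA {x y u : V} :
    u ∈ sideA T x y ↔ (T \ fromEdgeSet {s(x,y)}).Reachable u x := by
  simp [sideA]

/-- the `y`-side. -/
noncomputable def sideB (T : SimpleGraph V) (x y : V) : Finset V :=
  sideA T y x

lemma mem_sideB {x y u : V} :
    u ∈ sideB T x y ↔ (T \ fromEdgeSet {s(x,y)}).Reachable u y := by
  rw [sideB, mem_sideA, Sym2.eq_swap]

lemma sideA_card_add (hT : T.IsTree) {x y : V} (hxy : T.Adj x y) :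
    (sideA T x y).card + (sideB T x y).card = Fintype.card V := by
  classical
  have hdis : Disjoint (sideA T x y) (sideB T x y) := by
    rw [Finset.disjoint_left]
    intro u hu hv
    exact side_not_both hT hxy u ⟨mem_sideA.mp hu, mem_sideB.mp hv⟩
  have hun : sideA T x y ∪ sideB T x y = univ := by
    ext u
    simp only [Finset.mem_union, Finset.mem_univ, iff_true, mem_sideA, mem_sideB]
    exact side_total hT hxy u
  rw [← Finset.card_union_of_disjoint hdis, hun, Finset.card_univ]

lemma x_mem_sideA {x y : V} : x ∈ sideA T x y := mem_sideA.mpr (Reachable.refl x)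
lemma y_mem_sideB {x y : V} : y ∈ sideB T x y := mem_sideB.mpr (Reachable.refl y)

/-- generic cross-counting lemma -/
lemma sum_cross {α : Type*} [Fintype α] (P Q : α → Prop)
    (R' : α → α → Prop)
    (hPQ : ∀ a, ¬(P a ∧ Q a))
    (hR : ∀ a b, R' a b ↔ (P a ∧ Q b) ∨ (Q a ∧ P b)) :
    ∑ a : α, ∑ b : α, ind (R' a b) =
      2 * (∑ a : α, ind (P a)) * (∑ a : α, ind (Q a)) := by
  have step : ∀ a b : α, ind (R' a b) = ind (P a) * ind (Q b) + ind (Q a) * ind (P b) := by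
    intro a b
    rw [ind_congr (hR a b), ind_or, ind_and, ind_and]
    rintro ⟨⟨hp, _⟩, ⟨hq, _⟩⟩
    exact hPQ a ⟨hp, hq⟩
  calc ∑ a : α, ∑ b : α, ind (R' a b)
      = ∑ a : α, ∑ b : α, (ind (P a) * ind (Q b) + ind (Q a) * ind (P b)) := by
        refine Finset.sum_congr rfl fun a _ => Finset.sum_congr rfl fun b _ => step a b
    _ = (∑ a : α, ind (P a)) * (∑ b : α, ind (Q b))
        + (∑ a : α, ind (Q a)) * (∑ b : α, ind (P b)) := by
        rw [Finset.sum_mul_sum, Finset.sum_mul_sum, ← Finset.sum_add_distrib]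
        refine Finset.sum_congr rfl fun a _ => ?_
        rw [← Finset.sum_add_distrib]
    _ = 2 * (∑ a : α, ind (P a)) * (∑ a : α, ind (Q a)) := by ring

lemma count_vertex_pairs (hT : T.IsTree) {x y : V} (hxy : T.Adj x y) :
    ∑ u : V, ∑ v : V, ind (s(x,y) ∈ (pth hT u v).edges) =
      2 * (sideA T x y).card * (sideB T x y).card := by
  classical
  have h := sum_cross (fun u => u ∈ sideA T x y) (fun u => u ∈ sideB T x y)
    (fun u v => s(x,y) ∈ (pth hT u v).edges)
    (fun u hu => side_not_both hT hxy u ⟨mem_sideA.mp hu.1, mem_sideB.mp hu.2⟩)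
    (fun u v => by
      rw [mem_pth_iff_not_reach hT, cross_iff hT hxy]
      simp only [mem_sideA, mem_sideB])
  rw [h, sum_ind, sum_ind, Finset.filter_mem_eq_inter, Finset.filter_mem_eq_inter,
    Finset.univ_inter, Finset.univ_inter]

end WienerAux4
set_option linter.unusedSectionVars false
namespace WienerAux5
open SimpleGraph Finset WienerAux WienerAux2 WienerAux3 WienerAux4

variable {V : Type*} [DecidableEq V] {T : SimpleGraph V} [Fintype V]

/-- The separation condition for edges. -/
def condC (hT : T.IsTree) (g : Sym2 V) (e f : T.edgeSet) : Prop :=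
  ∀ a ∈ (e : Sym2 V), ∀ b ∈ (f : Sym2 V), g ∈ (pth hT a b).edges

/-- An edge is inside the `x`-side. -/
def inA (T : SimpleGraph V) (x y : V) (e : T.edgeSet) : Prop :=
  ∀ w ∈ (e : Sym2 V), w ∈ sideA T x y

def inB (T : SimpleGraph V) (x y : V) (e : T.edgeSet) : Prop :=
  ∀ w ∈ (e : Sym2 V), w ∈ sideB T x y

lemma not_inA_and_inB (hT : T.IsTree) {x y : V} (hxy : T.Adj x y) (e : T.edgeSet) :
    ¬ (inA T x y e ∧ inB T x y e) := by
  rintro ⟨hA, hB⟩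
  have hm := Sym2.out_fst_mem (e : Sym2 V)
  exact side_not_both hT hxy _ ⟨mem_sideA.mp (hA _ hm), mem_sideB.mp (hB _ hm)⟩

lemma edge_side_total (hT : T.IsTree) {x y : V} (hxy : T.Adj x y) (e : T.edgeSet)
    (hne : (e : Sym2 V) ≠ s(x, y)) : inA T x y e ∨ inB T x y e := by
  obtain ⟨ev, he⟩ := e
  revert hne
  induction ev using Sym2.ind with
  | _ p q =>
    intro hne
    have hpq : T.Adj p q := he
    have hG : (T \ fromEdgeSet {s(x,y)}).Adj p q := by
      rw [sdiff_adj]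
      refine ⟨hpq, ?_⟩
      rw [fromEdgeSet_adj]
      rintro ⟨hmem, -⟩
      exact hne (Set.mem_singleton_iff.mp hmem)
    rcases side_total hT hxy p with hp | hp
    · left
      intro w hw
      rw [Sym2.mem_iff] at hw
      rcases hw with rfl | rfl
      · exact mem_sideA.mpr hp
      · exact mem_sideA.mpr (hG.reachable.symm.trans hp)
    · right
      intro w hw
      rw [Sym2.mem_iff] at hw
      rcases hw with rfl | rfl
      · exact mem_sideB.mpr hp
      · exact mem_sideB.mpr (hG.reachable.symm.trans hp)

lemma condC_iff (hT : T.IsTree) {x y : V} (hxy : T.Adj x y) (e f : T.edgeSet) :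
    condC hT s(x,y) e f ↔
      (inA T x y e ∧ inB T x y f) ∨ (inB T x y e ∧ inA T x y f) := by
  constructor
  · intro h
    -- first, e ≠ g and f ≠ g
    have hf : (f : Sym2 V) ≠ s(x,y) := by
      intro hfe
      have ha0 : ((e : Sym2 V).out.1) ∈ (e : Sym2 V) := Sym2.out_fst_mem _
      set a0 := ((e : Sym2 V).out.1)
      have hx : x ∈ (f : Sym2 V) := by rw [hfe]; exact Sym2.mem_mk_left x y
      have hy : y ∈ (f : Sym2 V) := by rw [hfe]; exact Sym2.mem_mk_right x y
      have h1 := (mem_pth_iff_not_reach hT _ _ _).mp (h a0 ha0 x hx)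
      have h2 : ¬ (T \ fromEdgeSet {s(x,y)}).Reachable a0 y := by
        have := h a0 ha0 y hy
        rw [mem_pth_iff_not_reach hT] at this
        exact this
      rcases side_total hT hxy a0 with hs | hs
      · exact h1 hs
      · exact h2 hs
    have he : (e : Sym2 V) ≠ s(x,y) := by
      intro hee
      have hb0 : ((f : Sym2 V).out.1) ∈ (f : Sym2 V) := Sym2.out_fst_mem _
      set b0 := ((f : Sym2 V).out.1)
      have hx : x ∈ (e : Sym2 V) := by rw [hee]; exact Sym2.mem_mk_left x y
      have hy : y ∈ (e : Sym2 V) := by rw [hee]; exact Sym2.mem_mk_right x y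
      have h1 := (mem_pth_iff_not_reach hT _ _ _).mp (h x hx b0 hb0)
      have h2 := (mem_pth_iff_not_reach hT _ _ _).mp (h y hy b0 hb0)
      rcases side_total hT hxy b0 with hs | hs
      · exact h1 hs.symm
      · exact h2 hs.symm
    rcases edge_side_total hT hxy e he with hA | hB <;>
      rcases edge_side_total hT hxy f hf with hA' | hB'
    · exfalso
      have ha0 : ((e : Sym2 V).out.1) ∈ (e : Sym2 V) := Sym2.out_fst_mem _
      set a0 := ((e : Sym2 V).out.1)
      have hb0 : ((f : Sym2 V).out.1) ∈ (f : Sym2 V) := Sym2.out_fst_mem _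
      set b0 := ((f : Sym2 V).out.1)
      have hr := (mem_sideA.mp (hA a0 ha0)).trans (mem_sideA.mp (hA' b0 hb0)).symm
      exact (mem_pth_iff_not_reach hT _ _ _).mp (h a0 ha0 b0 hb0) hr
    · exact Or.inl ⟨hA, hB'⟩
    · exact Or.inr ⟨hB, hA'⟩
    · exfalso
      have ha0 : ((e : Sym2 V).out.1) ∈ (e : Sym2 V) := Sym2.out_fst_mem _
      set a0 := ((e : Sym2 V).out.1)
      have hb0 : ((f : Sym2 V).out.1) ∈ (f : Sym2 V) := Sym2.out_fst_mem _
      set b0 := ((f : Sym2 V).out.1)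
      have hr := (mem_sideB.mp (hB a0 ha0)).trans (mem_sideB.mp (hB' b0 hb0)).symm
      exact (mem_pth_iff_not_reach hT _ _ _).mp (h a0 ha0 b0 hb0) hr
  · rintro (⟨hA, hB⟩ | ⟨hB, hA⟩) a ha b hb
    · rw [mem_pth_iff_not_reach hT, cross_iff hT hxy]
      exact Or.inl ⟨mem_sideA.mp (hA a ha), mem_sideB.mp (hB b hb)⟩
    · rw [mem_pth_iff_not_reach hT, cross_iff hT hxy]
      exact Or.inr ⟨mem_sideB.mp (hB a ha), mem_sideA.mp (hA b hb)⟩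

end WienerAux5
set_option linter.unusedSectionVars false
namespace WienerAux6
open SimpleGraph Finset WienerAux WienerAux2 WienerAux3 WienerAux4 WienerAux5

variable {V : Type*} [DecidableEq V] {T : SimpleGraph V} [Fintype V] [DecidableRel T.Adj]

lemma cardA_edges (hT : T.IsTree) {x y : V} (hxy : T.Adj x y) :
    (∑ e : T.edgeSet, ind (inA T x y e)) + 1 = (sideA T x y).card := by
  classical
  rw [sum_ind]
  have hbij : ((sideA T x y).erase x).card
      = (univ.filter (fun e : T.edgeSet => inA T x y e)).card := by
    refine Finset.card_bij
      (fun u hu => (⟨s(u, (pth hT u x).getVert 1),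
        (T.mem_edgeSet).mpr
          (walk_first _ (pth_pos_length hT (Finset.mem_erase.mp hu).1)).1⟩ : T.edgeSet))
      ?_ ?_ ?_
    · intro u hu
      obtain ⟨hu1, hu2⟩ := Finset.mem_erase.mp hu
      have hRux := mem_sideA.mp hu2
      have havoid : s(x,y) ∉ (pth hT u x).edges := (pth_avoid_iff hT _ u x).mpr hRux
      obtain ⟨hadj, hmem⟩ := walk_first (pth hT u x) (pth_pos_length hT hu1)
      have hsupp : (pth hT u x).getVert 1 ∈ (pth hT u x).support :=
        Walk.snd_mem_support_of_mem_edges _ hmem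
      have hR1 : (T \ fromEdgeSet {s(x,y)}).Reachable ((pth hT u x).getVert 1) x := by
        refine (reach_del_iff T _ _ _).mpr ⟨(pth hT u x).dropUntil _ hsupp, fun hc => ?_⟩
        exact havoid (Walk.edges_dropUntil_subset _ hsupp hc)
      rw [Finset.mem_filter]
      refine ⟨Finset.mem_univ _, fun w hw => ?_⟩
      rw [Sym2.mem_iff] at hw
      rcases hw with rfl | rfl
      · exact mem_sideA.mpr hRux
      · exact mem_sideA.mpr hR1
    · intro u hu u' hu' heq
      have hval := congrArg Subtype.val heq
      simp only at hval
      rw [Sym2.mk_eq_mk_iff (p := (u, _)) (q := (u', _))] at hval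
      rcases hval with h | h
      · exact (Prod.mk.injEq _ _ _ _ ▸ h).1
      · have h1 : u = (pth hT u' x).getVert 1 := (Prod.mk.injEq _ _ _ _ ▸ h).1
        have h2 : (pth hT u x).getVert 1 = u' := (Prod.mk.injEq _ _ _ _ ▸ h).2
        have d1 := dist_dec hT (Finset.mem_erase.mp hu).1
        have d2 := dist_dec hT (Finset.mem_erase.mp hu').1
        rw [h2] at d1
        rw [← h1] at d2
        omega
    · rintro ⟨ev, hev⟩ he
      revert he
      revert hev
      induction ev using Sym2.ind with
      | _ c d =>
        intro hev he
        have hcd : T.Adj c d := hev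
        have hin := (Finset.mem_filter.mp he).2
        have hc : c ∈ sideA T x y := hin c (Sym2.mem_mk_left c d)
        have hd : d ∈ sideA T x y := hin d (Sym2.mem_mk_right c d)
        rcases adj_dist_cases hT hcd x with h1 | h2
        · have hcx : c ≠ x := by
            intro rfl'
            rw [rfl', SimpleGraph.dist_self] at h1
            omega
          refine ⟨c, Finset.mem_erase.mpr ⟨hcx, hc⟩, ?_⟩
          apply Subtype.ext
          simp only
          rw [pth_first_vert hT hcd h1]
        · have hdx : d ≠ x := by
            intro rfl'
            rw [rfl', SimpleGraph.dist_self] at h2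
            omega
          refine ⟨d, Finset.mem_erase.mpr ⟨hdx, hd⟩, ?_⟩
          apply Subtype.ext
          simp only
          rw [pth_first_vert hT hcd.symm h2, Sym2.eq_swap]
  rw [← hbij, Finset.card_erase_add_one (x_mem_sideA)]

lemma count_edge_pairs (hT : T.IsTree) {x y : V} (hxy : T.Adj x y) :
    ∑ e : T.edgeSet, ∑ f : T.edgeSet, ind (condC hT s(x,y) e f) =
      2 * (∑ e : T.edgeSet, ind (inA T x y e)) * (∑ e : T.edgeSet, ind (inB T x y e)) := by
  exact sum_cross (fun e => inA T x y e) (fun e => inB T x y e)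
    (fun e f => condC hT s(x,y) e f)
    (fun e => not_inA_and_inB hT hxy e)
    (fun e f => condC_iff hT hxy e f)

lemma per_edge (hT : T.IsTree) {x y : V} (hxy : T.Adj x y) :
    (∑ e : T.edgeSet, ∑ f : T.edgeSet, ind (condC hT s(x,y) e f)) + 2 * Fintype.card V
      = (∑ u : V, ∑ v : V, ind (s(x,y) ∈ (pth hT u v).edges)) + 2 := by
  classical
  rw [count_edge_pairs hT hxy, count_vertex_pairs hT hxy]
  have h1 := cardA_edges hT hxy
  have h2 : (∑ e : T.edgeSet, ind (inB T x y e)) + 1 = (sideB T x y).card := by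
    have h := cardA_edges hT hxy.symm
    have hsum : (∑ e : T.edgeSet, ind (inB T x y e)) = ∑ e : T.edgeSet, ind (inA T y x e) := rfl
    rw [hsum]
    exact h
  have h3 := sideA_card_add hT hxy
  set cA := (∑ e : T.edgeSet, ind (inA T x y e))
  set cB := (∑ e : T.edgeSet, ind (inB T x y e))
  set a := (sideA T x y).card
  set b := (sideB T x y).card
  have ha : a = cA + 1 := h1.symm
  have hb : b = cB + 1 := h2.symm
  rw [← h3, ha, hb]
  ring

end WienerAux6
set_option linter.unusedSectionVars false
namespace WienerAux7
open SimpleGraph Finset WienerAux WienerAux2 WienerAux3 WienerAux4 WienerAux5 WienerAux6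

variable {V : Type*} [DecidableEq V] {T : SimpleGraph V} [Fintype V] [DecidableRel T.Adj]

lemma dist_eq_sum (hT : T.IsTree) (u v : V) :
    T.dist u v = ∑ g ∈ T.edgeFinset, ind (g ∈ (pth hT u v).edges) := by
  classical
  rw [sum_ind]
  have hfil : T.edgeFinset.filter (· ∈ (pth hT u v).edges) = (pth hT u v).edges.toFinset := by
    ext g
    simp only [Finset.mem_filter, List.mem_toFinset, mem_edgeFinset]
    exact ⟨fun h => h.2, fun h => ⟨Walk.edges_subset_edgeSet _ h, h⟩⟩
  rw [hfil, List.toFinset_card_of_nodup (pth_isPath hT u v).isTrail.edges_nodup,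
    Walk.length_edges, pth_length]

lemma claimC (hT : T.IsTree) {x y : V} (hxy : T.Adj x y) {e f : T.edgeSet} {u v : V}
    (hu : u ∈ (e : Sym2 V)) (hv : v ∈ (f : Sym2 V)) (hmin : T.dist u v = mm T e f) :
    s(x,y) ∈ (pth hT u v).edges ↔ condC hT s(x,y) e f := by
  constructor
  · intro hmem
    have hnR : ¬ (T \ fromEdgeSet {s(x,y)}).Reachable u v :=
      (mem_pth_iff_not_reach hT _ u v).mp hmem
    have hxs : x ∈ (pth hT u v).support := Walk.fst_mem_support_of_mem_edges _ hmem
    have hys : y ∈ (pth hT u v).support := Walk.snd_mem_support_of_mem_edges _ hmem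
    have he : (e : Sym2 V) ≠ s(x,y) := by
      intro hee
      have hx : x ∈ (e : Sym2 V) := by rw [hee]; exact Sym2.mem_mk_left x y
      have hy : y ∈ (e : Sym2 V) := by rw [hee]; exact Sym2.mem_mk_right x y
      have hu' : u = x ∨ u = y := by rw [hee] at hu; rwa [Sym2.mem_iff] at hu
      rcases hu' with rfl | rfl
      · have hsplit := dist_split hT hys
        have hpos : 0 < T.dist u y := hT.isConnected.pos_dist_of_ne hxy.ne
        have hle := mm_le (T := T) hy hv
        omega
      · have hsplit := dist_split hT hxs
        have hpos : 0 < T.dist u x := hT.isConnected.pos_dist_of_ne hxy.ne.symm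
        have hle := mm_le (T := T) hx hv
        omega
    have hf : (f : Sym2 V) ≠ s(x,y) := by
      intro hfe
      have hx : x ∈ (f : Sym2 V) := by rw [hfe]; exact Sym2.mem_mk_left x y
      have hy : y ∈ (f : Sym2 V) := by rw [hfe]; exact Sym2.mem_mk_right x y
      have hv' : v = x ∨ v = y := by rw [hfe] at hv; rwa [Sym2.mem_iff] at hv
      rcases hv' with rfl | rfl
      · have hsplit := dist_split hT hys
        have hpos : 0 < T.dist y v := hT.isConnected.pos_dist_of_ne hxy.ne.symm
        have hle := mm_le (T := T) hu hy
        omega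
      · have hsplit := dist_split hT hxs
        have hpos : 0 < T.dist x v := hT.isConnected.pos_dist_of_ne hxy.ne
        have hle := mm_le (T := T) hu hx
        omega
    intro a ha b hb
    rw [mem_pth_iff_not_reach hT]
    intro hR
    have hau : (T \ fromEdgeSet {s(x,y)}).Reachable a u := by
      by_cases hauEq : a = u
      · subst hauEq; exact Reachable.refl a
      · have heq : (e : Sym2 V) = s(a, u) := eq_of_two_mem e.2 ha hu hauEq
        have hadj : T.Adj a u := by
          have h2 := e.2
          rw [heq] at h2
          exact h2
        refine Adj.reachable ?_
        rw [sdiff_adj]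
        refine ⟨hadj, ?_⟩
        rw [fromEdgeSet_adj]
        rintro ⟨h1, -⟩
        rw [Set.mem_singleton_iff] at h1
        exact he (heq.trans h1)
    have hbv : (T \ fromEdgeSet {s(x,y)}).Reachable b v := by
      by_cases hbvEq : b = v
      · subst hbvEq; exact Reachable.refl b
      · have heq : (f : Sym2 V) = s(b, v) := eq_of_two_mem f.2 hb hv hbvEq
        have hadj : T.Adj b v := by
          have h2 := f.2
          rw [heq] at h2
          exact h2
        refine Adj.reachable ?_
        rw [sdiff_adj]
        refine ⟨hadj, ?_⟩
        rw [fromEdgeSet_adj]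
        rintro ⟨h1, -⟩
        rw [Set.mem_singleton_iff] at h1
        exact hf (heq.trans h1)
    exact hnR ((hau.symm.trans hR).trans hbv)
  · intro h
    exact h u hu v hv

lemma mm_eq_sum (hT : T.IsTree) (e f : T.edgeSet) :
    mm T e f = ∑ g ∈ T.edgeFinset, ind (condC hT g e f) := by
  obtain ⟨u, v, hu, hv, hd⟩ := mm_exists e f
  rw [← hd, dist_eq_sum hT u v]
  refine Finset.sum_congr rfl fun g hg => ?_
  apply ind_congr
  have hgs : g ∈ T.edgeSet := mem_edgeFinset.mp hg
  revert hgs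
  induction g using Sym2.ind with
  | _ x y =>
    intro hgs
    exact claimC hT hgs hu hv hd

lemma F1 (hT : T.IsTree) :
    (∑ e : T.edgeSet, ∑ f : T.edgeSet, T.lineGraph.dist e f) + Fintype.card T.edgeSet
      = (∑ e : T.edgeSet, ∑ f : T.edgeSet, mm T e f)
        + Fintype.card T.edgeSet * Fintype.card T.edgeSet := by
  classical
  have hptwise : ∀ e f : T.edgeSet,
      T.lineGraph.dist e f + ind (e = f) = mm T e f + ind (e ≠ f) + ind (e = f) := by
    intro e f
    by_cases hef : e = f
    · subst hef
      rw [SimpleGraph.dist_self, mm_self, ind_neg (show ¬ e ≠ e from fun h => h rfl)]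
    · rw [line_dist hT hef, ind_pos hef, ind_neg hef]
  have hdiag : ∀ e : T.edgeSet, (∑ f : T.edgeSet, ind (e = f)) = 1 := by
    intro e
    rw [sum_ind, Finset.filter_eq]
    simp
  have hsum : ∀ e : T.edgeSet,
      (∑ f : T.edgeSet, (ind (e ≠ f) + ind (e = f))) = Fintype.card T.edgeSet := by
    intro e
    have : ∀ f : T.edgeSet, ind (e ≠ f) + ind (e = f) = 1 := by
      intro f
      by_cases hef : e = f
      · rw [ind_neg (fun h => h hef), ind_pos hef]
      · rw [ind_pos hef, ind_neg hef]
    rw [Finset.sum_congr rfl (fun f _ => this f)]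
    simp [Finset.card_univ]
  calc (∑ e : T.edgeSet, ∑ f : T.edgeSet, T.lineGraph.dist e f) + Fintype.card T.edgeSet
      = ∑ e : T.edgeSet, ((∑ f : T.edgeSet, T.lineGraph.dist e f) + 1) := by
        rw [Finset.sum_add_distrib]
        simp [Finset.card_univ]
    _ = ∑ e : T.edgeSet, ∑ f : T.edgeSet, (T.lineGraph.dist e f + ind (e = f)) := by
        refine Finset.sum_congr rfl fun e _ => ?_
        rw [Finset.sum_add_distrib, hdiag e]
    _ = ∑ e : T.edgeSet, ∑ f : T.edgeSet, (mm T e f + ind (e ≠ f) + ind (e = f)) := by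
        refine Finset.sum_congr rfl fun e _ => Finset.sum_congr rfl fun f _ => hptwise e f
    _ = ∑ e : T.edgeSet, ((∑ f : T.edgeSet, mm T e f) + Fintype.card T.edgeSet) := by
        refine Finset.sum_congr rfl fun e _ => ?_
        rw [← hsum e, ← Finset.sum_add_distrib]
        refine Finset.sum_congr rfl fun f _ => ?_
        ring
    _ = (∑ e : T.edgeSet, ∑ f : T.edgeSet, mm T e f)
        + Fintype.card T.edgeSet * Fintype.card T.edgeSet := by
        rw [Finset.sum_add_distrib]
        simp [Finset.card_univ, Finset.sum_const]

lemma F2 (hT : T.IsTree) :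
    (∑ e : T.edgeSet, ∑ f : T.edgeSet, mm T e f)
        + 2 * Fintype.card T.edgeSet * Fintype.card V
      = (∑ u : V, ∑ v : V, T.dist u v) + 2 * Fintype.card T.edgeSet := by
  classical
  have hM : (∑ e : T.edgeSet, ∑ f : T.edgeSet, mm T e f)
      = ∑ g ∈ T.edgeFinset, ∑ e : T.edgeSet, ∑ f : T.edgeSet, ind (condC hT g e f) := by
    calc (∑ e : T.edgeSet, ∑ f : T.edgeSet, mm T e f)
        = ∑ e : T.edgeSet, ∑ f : T.edgeSet, ∑ g ∈ T.edgeFinset, ind (condC hT g e f) := by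
          refine Finset.sum_congr rfl fun e _ => Finset.sum_congr rfl fun f _ => ?_
          exact mm_eq_sum hT e f
      _ = ∑ e : T.edgeSet, ∑ g ∈ T.edgeFinset, ∑ f : T.edgeSet, ind (condC hT g e f) := by
          exact Finset.sum_congr rfl fun e _ => Finset.sum_comm
      _ = ∑ g ∈ T.edgeFinset, ∑ e : T.edgeSet, ∑ f : T.edgeSet, ind (condC hT g e f) :=
          Finset.sum_comm
  have hD : (∑ u : V, ∑ v : V, T.dist u v)
      = ∑ g ∈ T.edgeFinset, ∑ u : V, ∑ v : V, ind (g ∈ (pth hT u v).edges) := by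
    calc (∑ u : V, ∑ v : V, T.dist u v)
        = ∑ u : V, ∑ v : V, ∑ g ∈ T.edgeFinset, ind (g ∈ (pth hT u v).edges) := by
          refine Finset.sum_congr rfl fun u _ => Finset.sum_congr rfl fun v _ => ?_
          exact dist_eq_sum hT u v
      _ = ∑ u : V, ∑ g ∈ T.edgeFinset, ∑ v : V, ind (g ∈ (pth hT u v).edges) := by
          exact Finset.sum_congr rfl fun u _ => Finset.sum_comm
      _ = ∑ g ∈ T.edgeFinset, ∑ u : V, ∑ v : V, ind (g ∈ (pth hT u v).edges) :=
          Finset.sum_comm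
  have hper : ∀ g ∈ T.edgeFinset,
      (∑ e : T.edgeSet, ∑ f : T.edgeSet, ind (condC hT g e f)) + 2 * Fintype.card V
        = (∑ u : V, ∑ v : V, ind (g ∈ (pth hT u v).edges)) + 2 := by
    intro g hg
    have hgs : g ∈ T.edgeSet := mem_edgeFinset.mp hg
    revert hgs
    induction g using Sym2.ind with
    | _ x y =>
      intro hgs
      exact per_edge hT hgs
  have hsum := Finset.sum_congr rfl hper
  rw [Finset.sum_add_distrib, Finset.sum_add_distrib, Finset.sum_const, Finset.sum_const,
    T.edgeFinset_card] at hsum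
  rw [hM, hD]
  have : Fintype.card T.edgeSet • (2 * Fintype.card V)
      = 2 * Fintype.card T.edgeSet * Fintype.card V := by
    rw [smul_eq_mul]; ring
  rw [this] at hsum
  have h2 : Fintype.card T.edgeSet • 2 = 2 * Fintype.card T.edgeSet := by
    rw [smul_eq_mul]; ring
  rw [h2] at hsum
  exact hsum

lemma F3 (hT : T.IsTree) : Fintype.card T.edgeSet + 1 = Fintype.card V := by
  rw [← T.edgeFinset_card]
  exact hT.card_edgeFinset

end WienerAux7


theorem wiener_lineGraph_tree {V : Type*} [Fintype V] [DecidableEq V] [Nonempty V]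
    (T : SimpleGraph V) [DecidableRel T.Adj] (hT : T.IsTree) :
    wienerIndex T.lineGraph =
      wienerIndex T - (Fintype.card V : ℚ) * ((Fintype.card V : ℚ) - 1) / 2 := by
  classical
  have h1 := WienerAux7.F1 hT
  have h2 := WienerAux7.F2 hT
  have h3 := WienerAux7.F3 hT
  have h1q := congrArg (fun k : ℕ => (k : ℚ)) h1
  have h2q := congrArg (fun k : ℕ => (k : ℚ)) h2
  have h3q := congrArg (fun k : ℕ => (k : ℚ)) h3
  push_cast [-Nat.cast_sum] at h1q h2q h3q
  rw [wienerIndex, wienerIndex]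
  have hL : (∑ u : T.edgeSet, ∑ v : T.edgeSet, (T.lineGraph.dist u v : ℚ))
      = ((∑ e : T.edgeSet, ∑ f : T.edgeSet, T.lineGraph.dist e f : ℕ) : ℚ) := by
    push_cast
    rfl
  have hD : (∑ u : V, ∑ v : V, (T.dist u v : ℚ))
      = ((∑ u : V, ∑ v : V, T.dist u v : ℕ) : ℚ) := by
    push_cast
    rfl
  rw [hL, hD]
  linear_combination (h1q + h2q) / 2
    + (((Fintype.card T.edgeSet : ℚ) - (Fintype.card V : ℚ)) / 2) * h3q
end

section
/- Let T be a tree on a finite nonempty vertex type V with n = |V| vertices. Then the sum over all ordered pairs (u,v) of vertices of deg_T(u)·deg_T(v)·dist_T(u,v) equals 8·W(T) − 2(n−1)(2n−1); equivalently, the multiplicative degree Wiener index W*(T) = (1/2)·Σ_{u,v} deg_T(u)·deg_T(v)·dist_T(u,v) equals 4·W(T) − (n−1)(2n−1). -/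
section Aux

open SimpleGraph Finset

variable {V : Type*}

private lemma mdw_dist_le_of_mem_support {T : SimpleGraph V} {u v x : V} (p : T.Walk u v)
    (hx : x ∈ p.support) : T.dist u x ≤ p.length := by
  classical
  exact le_trans (SimpleGraph.dist_le (p.takeUntil x hx)) (p.length_takeUntil_le hx)

private lemma mdw_parent_eu {T : SimpleGraph V} (hT : T.IsTree) (u : V) {v : V} (hv : v ≠ u) :
    ∃! w, T.Adj v w ∧ T.dist u w + 1 = T.dist u v := by
  have hconn := hT.isConnected
  have hd : 0 < T.dist u v := hconn.pos_dist_of_ne (Ne.symm hv)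
  obtain ⟨p, hp⟩ := hconn.exists_walk_length_eq_dist u v
  have hnil : ¬ p.Nil := by
    rw [SimpleGraph.Walk.nil_iff_length_eq]; omega
  rw [SimpleGraph.Walk.not_nil_iff] at hnil
  obtain ⟨a, ha, q, hq⟩ := hnil
  obtain ⟨x, q', h', hc⟩ := SimpleGraph.Walk.exists_cons_eq_concat ha q
  have hpx : T.dist u x + 1 = T.dist u v := by
    have h1 : T.dist u x ≤ q'.length := SimpleGraph.dist_le q'
    have h2 : q'.length + 1 = T.dist u v := by
      have h4 := congrArg SimpleGraph.Walk.length hc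
      rw [SimpleGraph.Walk.length_concat] at h4
      rw [hq] at hp
      simp only [SimpleGraph.Walk.length_cons] at hp h4
      omega
    have hxv : T.dist x v ≤ 1 := by
      simpa using SimpleGraph.dist_le (SimpleGraph.Walk.cons h' SimpleGraph.Walk.nil)
    have h3 : T.dist u v ≤ T.dist u x + T.dist x v := hconn.dist_triangle
    omega
  refine ⟨x, ⟨h'.symm, hpx⟩, ?_⟩
  rintro w ⟨hw, hwd⟩
  have mkpath : ∀ (y : V), T.Adj v y → T.dist u y + 1 = T.dist u v →
      ∃ (r : T.Walk u y) (hry : T.Adj y v), (r.concat hry).IsPath ∧ r.length = T.dist u y := by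
    intro y hy hyd
    obtain ⟨r, hr⟩ := hconn.exists_walk_length_eq_dist u y
    have hrp : r.IsPath := r.isPath_of_length_eq_dist hr
    refine ⟨r, hy.symm, ?_, hr⟩
    rw [SimpleGraph.Walk.isPath_def, SimpleGraph.Walk.support_concat,
      List.nodup_append']
    refine ⟨hrp.support_nodup, List.nodup_singleton v, ?_⟩
    intro z hz hz'
    simp at hz'
    subst hz'
    have := mdw_dist_le_of_mem_support r hz
    omega
  obtain ⟨r1, hr1a, hr1p, hr1len⟩ := mkpath w hw hwd
  obtain ⟨r2, hr2a, hr2p, hr2len⟩ := mkpath x h'.symm hpx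
  have huniq := (SimpleGraph.isAcyclic_iff_path_unique.mp hT.IsAcyclic)
      ⟨r1.concat hr1a, hr1p⟩ ⟨r2.concat hr2a, hr2p⟩
  have : r1.concat hr1a = r2.concat hr2a := congrArg Subtype.val huniq
  obtain ⟨hv', -⟩ := SimpleGraph.Walk.concat_inj this
  exact hv'

private lemma mdw_adj_dist_ne {T : SimpleGraph V} (hT : T.IsTree) (u : V) {v w : V}
    (h : T.Adj v w) : T.dist u v ≠ T.dist u w := by
  classical
  intro he
  have hconn := hT.isConnected
  by_cases hvu : v = u
  · subst hvu
    rw [SimpleGraph.dist_self] at he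
    have := hconn.pos_dist_of_ne h.ne
    omega
  have hd : 0 < T.dist u v := hconn.pos_dist_of_ne (Ne.symm hvu)
  obtain ⟨p, hp⟩ := hconn.exists_walk_length_eq_dist u v
  have hpp : p.IsPath := p.isPath_of_length_eq_dist hp
  obtain ⟨q, hq⟩ := hconn.exists_walk_length_eq_dist u w
  have hqp : q.IsPath := q.isPath_of_length_eq_dist hq
  have hvq : v ∉ q.support := by
    intro hvs
    have h1 : T.dist u v ≤ (q.takeUntil v hvs).length := SimpleGraph.dist_le _
    have h2 := congrArg SimpleGraph.Walk.length (q.take_spec hvs)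
    rw [SimpleGraph.Walk.length_append] at h2
    have h3 : (q.dropUntil v hvs).length = 0 := by omega
    have h4 : v = w := (SimpleGraph.Walk.nil_iff_length_eq.mpr h3).eq
    exact h.ne h4
  have hq2 : (q.concat h.symm).IsPath := by
    rw [SimpleGraph.Walk.isPath_def, SimpleGraph.Walk.support_concat,
      List.nodup_append']
    exact ⟨hqp.support_nodup, List.nodup_singleton v, fun z hz hz' => by
      simp at hz'; subst hz'; exact hvq hz⟩
  have huniq := (SimpleGraph.isAcyclic_iff_path_unique.mp hT.IsAcyclic)
      ⟨p, hpp⟩ ⟨q.concat h.symm, hq2⟩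
  have hlen : p.length = (q.concat h.symm).length :=
    congrArg SimpleGraph.Walk.length (congrArg Subtype.val huniq)
  rw [SimpleGraph.Walk.length_concat] at hlen
  omega

private lemma mdw_adj_dist_dichot {T : SimpleGraph V} (hT : T.IsTree) (u : V) {v w : V}
    (h : T.Adj v w) : T.dist u w + 1 = T.dist u v ∨ T.dist u v + 1 = T.dist u w := by
  have hconn := hT.isConnected
  have hne := mdw_adj_dist_ne hT u h
  have hvw : T.dist v w ≤ 1 := by
    simpa using SimpleGraph.dist_le (SimpleGraph.Walk.cons h SimpleGraph.Walk.nil)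
  have hwv : T.dist w v ≤ 1 := by
    simpa using SimpleGraph.dist_le (SimpleGraph.Walk.cons h.symm SimpleGraph.Walk.nil)
  have t1 : T.dist u v ≤ T.dist u w + T.dist w v := hconn.dist_triangle
  have t2 : T.dist u w ≤ T.dist u v + T.dist v w := hconn.dist_triangle
  omega

open Classical in
private noncomputable def mdwPar {T : SimpleGraph V} (hT : T.IsTree) (u v : V) : V :=
  if h : v ≠ u then (mdw_parent_eu hT u h).exists.choose else v

private lemma mdwPar_spec {T : SimpleGraph V} (hT : T.IsTree) (u : V) {v : V} (hv : v ≠ u) :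
    T.Adj v (mdwPar hT u v) ∧ T.dist u (mdwPar hT u v) + 1 = T.dist u v := by
  rw [mdwPar, dif_pos hv]
  exact (mdw_parent_eu hT u hv).exists.choose_spec

private lemma mdwPar_unique {T : SimpleGraph V} (hT : T.IsTree) (u : V) {v w : V} (hv : v ≠ u)
    (h : T.Adj v w) (hd : T.dist u w + 1 = T.dist u v) : w = mdwPar hT u v :=
  (mdw_parent_eu hT u hv).unique ⟨h, hd⟩ (mdwPar_spec hT u hv)

private lemma mdw_sum_deg_dist [Fintype V] {T : SimpleGraph V} [DecidableRel T.Adj]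
    (hT : T.IsTree) (u : V) :
    ∑ v : V, (T.degree v : ℚ) * (T.dist u v : ℚ)
      = 2 * ∑ v : V, (T.dist u v : ℚ) - ((Fintype.card V : ℚ) - 1) := by
  classical
  set E : Finset (V × V) := (univ ×ˢ univ).filter (fun p : V × V => T.Adj p.1 p.2) with hE
  have step1 : ∑ v : V, (T.degree v : ℚ) * (T.dist u v : ℚ)
      = ∑ p ∈ E, (T.dist u p.1 : ℚ) := by
    rw [hE, sum_filter, sum_product]
    refine Finset.sum_congr rfl fun v _ => ?_
    rw [SimpleGraph.degree, SimpleGraph.neighborFinset_eq_filter]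
    rw [← Finset.sum_boole]
    rw [Finset.sum_mul]
    refine Finset.sum_congr rfl fun w _ => ?_
    by_cases h : T.Adj v w <;> simp [h]
  set P : V × V → Prop := fun p => T.dist u p.2 + 1 = T.dist u p.1 with hP
  have memP : ∀ p : V × V, p ∈ E.filter P ↔ p.1 ≠ u ∧ p.2 = mdwPar hT u p.1 := by
    rintro ⟨v, w⟩
    simp only [hE, hP, mem_filter, mem_product, mem_univ, true_and]
    constructor
    · rintro ⟨hadj, hd⟩
      have hvu : v ≠ u := by
        rintro rfl
        rw [SimpleGraph.dist_self] at hd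
        omega
      exact ⟨hvu, mdwPar_unique hT u hvu hadj hd⟩
    · rintro ⟨hvu, rfl⟩
      exact ⟨(mdwPar_spec hT u hvu).1, (mdwPar_spec hT u hvu).2⟩
  have memQ : ∀ p : V × V, p ∈ E.filter (fun p => ¬ P p) ↔ p.2 ≠ u ∧ p.1 = mdwPar hT u p.2 := by
    rintro ⟨v, w⟩
    simp only [hE, hP, mem_filter, mem_product, mem_univ, true_and]
    constructor
    · rintro ⟨hadj, hnd⟩
      have hd : T.dist u v + 1 = T.dist u w := (mdw_adj_dist_dichot hT u hadj).resolve_left hnd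
      have hwu : w ≠ u := by
        rintro rfl
        rw [SimpleGraph.dist_self] at hd
        omega
      exact ⟨hwu, mdwPar_unique hT u hwu hadj.symm hd⟩
    · rintro ⟨hwu, rfl⟩
      refine ⟨(mdwPar_spec hT u hwu).1.symm, ?_⟩
      have := (mdwPar_spec hT u hwu).2
      omega
  have hu0 : (T.dist u u : ℚ) = 0 := by simp [SimpleGraph.dist_self]
  have sumP : ∑ p ∈ E.filter P, (T.dist u p.1 : ℚ) = ∑ v ∈ univ.erase u, (T.dist u v : ℚ) := by
    refine Finset.sum_nbij' Prod.fst (fun v => (v, mdwPar hT u v)) ?_ ?_ ?_ ?_ ?_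
    · intro p hp; rw [memP] at hp; simp [Finset.mem_erase, hp.1]
    · intro v hv; rw [memP]; simp only [Finset.mem_erase, Finset.mem_univ, and_true] at hv
      exact ⟨hv, rfl⟩
    · intro p hp; rw [memP] at hp; cases p; simp_all
    · intro v _; rfl
    · intro p _; rfl
  have sumQ : ∑ p ∈ E.filter (fun p => ¬ P p), (T.dist u p.1 : ℚ)
      = ∑ w ∈ univ.erase u, ((T.dist u w : ℚ) - 1) := by
    refine Finset.sum_nbij' Prod.snd (fun w => (mdwPar hT u w, w)) ?_ ?_ ?_ ?_ ?_
    · intro p hp; rw [memQ] at hp; simp [Finset.mem_erase, hp.1]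
    · intro w hw; rw [memQ]; simp only [Finset.mem_erase, Finset.mem_univ, and_true] at hw
      exact ⟨hw, rfl⟩
    · intro p hp; rw [memQ] at hp; cases p; simp_all
    · intro w _; rfl
    · intro p hp
      rw [memQ] at hp
      obtain ⟨hp2, hp1⟩ := hp
      rw [hp1]
      have h := (mdwPar_spec hT u hp2).2
      have : ((T.dist u (mdwPar hT u p.2) : ℕ) : ℚ) + 1 = (T.dist u p.2 : ℚ) := by
        exact_mod_cast congrArg (fun n : ℕ => (n : ℚ)) h
      linarith
  have hcard : ((univ.erase u).card : ℚ) = (Fintype.card V : ℚ) - 1 := by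
    rw [Finset.card_erase_of_mem (Finset.mem_univ u)]
    have h1 : 1 ≤ Fintype.card V := Fintype.card_pos_iff.mpr ⟨u⟩
    rw [Finset.card_univ, Nat.cast_sub h1]
    simp
  have herase : ∑ v ∈ univ.erase u, (T.dist u v : ℚ) = ∑ v : V, (T.dist u v : ℚ) :=
    Finset.sum_erase univ hu0
  rw [step1, ← Finset.sum_filter_add_sum_filter_not E P, sumP, sumQ,
    Finset.sum_sub_distrib, Finset.sum_const, herase]
  simp only [nsmul_eq_mul, mul_one]
  rw [hcard]
  ring

end Aux

theorem multiplicative_degree_wiener {V : Type*} [Fintype V] [Nonempty V]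
    (T : SimpleGraph V) [DecidableRel T.Adj] (hT : T.IsTree) :
    ∑ u : V, ∑ v : V, (T.degree u : ℚ) * (T.degree v : ℚ) * (T.dist u v : ℚ) =
      8 * wienerIndex T
        - 2 * ((Fintype.card V : ℚ) - 1) * (2 * (Fintype.card V : ℚ) - 1) := by
  classical
  set n : ℚ := (Fintype.card V : ℚ) with hn
  set D : V → ℚ := fun u => ∑ v : V, (T.dist u v : ℚ) with hD
  have key : ∀ u : V, ∑ v : V, (T.degree v : ℚ) * (T.dist u v : ℚ) = 2 * D u - (n - 1) :=
    fun u => mdw_sum_deg_dist hT u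
  have hcard1 : 1 ≤ Fintype.card V := Fintype.card_pos
  have hdeg : ∑ u : V, (T.degree u : ℚ) = 2 * (n - 1) := by
    have h1 := T.sum_degrees_eq_twice_card_edges
    have h2 := hT.card_edgeFinset
    have h3 : (∑ v : V, T.degree v) = 2 * (Fintype.card V - 1) := by omega
    calc ∑ u : V, (T.degree u : ℚ) = ((∑ v : V, T.degree v : ℕ) : ℚ) := by push_cast; rfl
      _ = ((2 * (Fintype.card V - 1) : ℕ) : ℚ) := by rw [h3]
      _ = 2 * (n - 1) := by rw [hn]; push_cast [Nat.cast_sub hcard1]; ring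
  have hDD : ∑ u : V, (T.degree u : ℚ) * D u = 2 * (∑ v : V, D v) - n * (n - 1) := by
    have h1 : ∑ u : V, (T.degree u : ℚ) * D u
        = ∑ v : V, ∑ u : V, (T.degree u : ℚ) * (T.dist u v : ℚ) := by
      rw [Finset.sum_comm]
      exact Finset.sum_congr rfl fun u _ => by rw [hD, Finset.mul_sum]
    have h2 : ∀ v : V, ∑ u : V, (T.degree u : ℚ) * (T.dist u v : ℚ) = 2 * D v - (n - 1) := by
      intro v
      rw [← key v]
      exact Finset.sum_congr rfl fun u _ => by rw [SimpleGraph.dist_comm]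
    rw [h1, Finset.sum_congr rfl (fun v _ => h2 v), Finset.sum_sub_distrib, Finset.sum_const,
      Finset.card_univ, Finset.mul_sum]
    simp only [nsmul_eq_mul, ← hn, Finset.mul_sum]
  have hmain : ∑ u : V, ∑ v : V, (T.degree u : ℚ) * (T.degree v : ℚ) * (T.dist u v : ℚ)
      = ∑ u : V, (T.degree u : ℚ) * (2 * D u - (n - 1)) := by
    refine Finset.sum_congr rfl fun u _ => ?_
    rw [← key u, Finset.mul_sum]
    exact Finset.sum_congr rfl fun v _ => by ring
  have hexp : ∑ u : V, (T.degree u : ℚ) * (2 * D u - (n - 1))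
      = 2 * (∑ u : V, (T.degree u : ℚ) * D u) - (n - 1) * (∑ u : V, (T.degree u : ℚ)) := by
    rw [Finset.mul_sum, Finset.mul_sum, ← Finset.sum_sub_distrib]
    exact Finset.sum_congr rfl fun u _ => by ring
  have hW : wienerIndex T = (∑ u : V, D u) / 2 := by
    rw [wienerIndex, hD]
  rw [hmain, hexp, hDD, hdeg, hW]
  ring
end

section
/- Let T be a tree on a finite nonempty vertex type V with n = |V| vertices. Then the Wiener index of T satisfies (n−1)^2 ≤ W(T). -/
theorem wiener_lower_bound {V : Type*} [Fintype V] [Nonempty V]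
    (T : SimpleGraph V) (hT : T.IsTree) :
    ((Fintype.card V : ℚ) - 1) ^ 2 ≤ wienerIndex T := by
  classical
  set n : ℚ := (Fintype.card V : ℚ) with hn
  -- pointwise lower bound
  have key : ∀ u v : V, (2 : ℚ) - (if u = v then 2 else 0) - (if T.Adj u v then 1 else 0)
      ≤ (T.dist u v : ℚ) := by
    intro u v
    by_cases huv : u = v
    · simp [huv]
    · by_cases hadj : T.Adj u v
      · have : T.dist u v = 1 := SimpleGraph.dist_eq_one_iff_adj.mpr hadj
        simp [huv, hadj, this]
        norm_num
      · have h1 : 1 ≤ T.dist u v := hT.isConnected.pos_dist_of_ne huv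
        have h2 : T.dist u v ≠ 1 := fun h => hadj (SimpleGraph.dist_eq_one_iff_adj.mp h)
        have : 2 ≤ T.dist u v := by omega
        have : (2 : ℚ) ≤ (T.dist u v : ℚ) := by exact_mod_cast this
        simpa [huv, hadj] using this
  have hsum : ∑ u : V, ∑ v : V,
      ((2 : ℚ) - (if u = v then 2 else 0) - (if T.Adj u v then 1 else 0))
      ≤ ∑ u : V, ∑ v : V, (T.dist u v : ℚ) := by
    apply Finset.sum_le_sum; intro u _
    apply Finset.sum_le_sum; intro v _
    exact key u v
  have hinner : ∀ u : V, ∑ v : V,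
      ((2 : ℚ) - (if u = v then 2 else 0) - (if T.Adj u v then 1 else 0))
      = 2 * n - 2 - (T.degree u : ℚ) := by
    intro u
    rw [Finset.sum_sub_distrib, Finset.sum_sub_distrib]
    have h1 : ∑ v : V, (2 : ℚ) = 2 * n := by
      simp [hn, mul_comm]
    have h2 : ∑ v : V, (if u = v then (2:ℚ) else 0) = 2 := by
      simp
    have h3 : ∑ v : V, (if T.Adj u v then (1:ℚ) else 0) = (T.degree u : ℚ) := by
      rw [Finset.sum_boole, SimpleGraph.degree, SimpleGraph.neighborFinset_eq_filter]
    rw [h1, h2, h3]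
  have hdeg : ∑ u : V, (T.degree u : ℚ) = 2 * (n - 1) := by
    have := SimpleGraph.sum_degrees_eq_twice_card_edges T
    have hcard := hT.card_edgeFinset
    have hpos : 1 ≤ Fintype.card V := Fintype.card_pos
    have : ∑ u : V, T.degree u = 2 * (Fintype.card V - 1) := by omega
    calc ∑ u : V, (T.degree u : ℚ) = ((∑ u : V, T.degree u : ℕ) : ℚ) := by push_cast; ring
      _ = ((2 * (Fintype.card V - 1) : ℕ) : ℚ) := by rw [this]
      _ = 2 * (n - 1) := by push_cast [hpos]; ring
  have htotal : ∑ u : V, ∑ v : V,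
      ((2 : ℚ) - (if u = v then 2 else 0) - (if T.Adj u v then 1 else 0))
      = 2 * (n - 1) ^ 2 := by
    calc ∑ u : V, ∑ v : V,
        ((2 : ℚ) - (if u = v then 2 else 0) - (if T.Adj u v then 1 else 0))
        = ∑ u : V, (2 * n - 2 - (T.degree u : ℚ)) := by
          apply Finset.sum_congr rfl; intro u _; exact hinner u
      _ = (Fintype.card V : ℚ) * (2 * n - 2) - ∑ u : V, (T.degree u : ℚ) := by
          rw [Finset.sum_sub_distrib]; simp [mul_comm]; ring
      _ = n * (2 * n - 2) - 2 * (n - 1) := by rw [hdeg]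
      _ = 2 * (n - 1) ^ 2 + (2 * n - 2 * n) := by ring
      _ = 2 * (n - 1) ^ 2 := by ring
  rw [wienerIndex]
  rw [htotal] at hsum
  linarith
end

section
/- Let T be a tree on a finite, nonempty, linearly ordered vertex type V, let m ≥ 1 be an integer, and let S be the m-order subdivision of T. Then for all vertices u, v of T, the distance in S between the original vertices satisfies dist_S(inl u, inl v) = (m+1)·dist_T(u,v). -/
/-- The `m`-order subdivision of a graph `T` on a linearly ordered vertex type:
every edge of `T` is replaced by a path of length `m + 1` through `m` new vertices. -/
def mSubdivision {V : Type*} [LinearOrder V] (T : SimpleGraph V) (m : ℕ) :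
    SimpleGraph (V ⊕ (T.edgeSet × Fin m)) :=
  SimpleGraph.fromRel (fun x y =>
    match x, y with
    | Sum.inl u, Sum.inr (e, i) =>
        (i.val = 0 ∧ u = Sym2.inf e.1) ∨ (i.val = m - 1 ∧ u = Sym2.sup e.1)
    | Sum.inr (e, i), Sum.inr (e', j) => e = e' ∧ i.val + 1 = j.val
    | _, _ => False)

section helpers
variable {V : Type*} [LinearOrder V] {T : SimpleGraph V} {m : ℕ}

lemma mSub_adj_inl_inr0 (e : T.edgeSet) (i : Fin m) (h : i.val = 0) :
    (mSubdivision T m).Adj (Sum.inl (Sym2.inf e.1)) (Sum.inr (e, i)) := by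
  rw [mSubdivision, SimpleGraph.fromRel_adj]
  exact ⟨by simp, Or.inl (Or.inl ⟨h, rfl⟩)⟩

lemma mSub_adj_inr_inl (e : T.edgeSet) (i : Fin m) (h : i.val = m - 1) :
    (mSubdivision T m).Adj (Sum.inr (e, i)) (Sum.inl (Sym2.sup e.1)) := by
  rw [mSubdivision, SimpleGraph.fromRel_adj]
  exact ⟨by simp, Or.inr (Or.inr ⟨h, rfl⟩)⟩

lemma mSub_adj_inr_inr (e : T.edgeSet) (i j : Fin m) (h : i.val + 1 = j.val) :
    (mSubdivision T m).Adj (Sum.inr (e, i)) (Sum.inr (e, j)) := by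
  rw [mSubdivision, SimpleGraph.fromRel_adj]
  refine ⟨?_, Or.inl ⟨rfl, h⟩⟩
  simp only [ne_eq, Sum.inr.injEq, Prod.mk.injEq, not_and]
  intro _ hij
  exact absurd (congrArg Fin.val hij) (by omega)

end helpers

section walks
variable {V : Type*} [LinearOrder V] {T : SimpleGraph V} {m : ℕ}

lemma mSub_gadget_walk (e : T.edgeSet) :
    ∀ j, ∀ (hj : j < m) (hj' : m - 1 - j < m),
    ∃ w : (mSubdivision T m).Walk (Sum.inr (e, ⟨m - 1 - j, hj'⟩)) (Sum.inl (Sym2.sup e.1)),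
      w.length = j + 1 := by
  intro j
  induction j with
  | zero =>
    intro hj hj'
    refine ⟨SimpleGraph.Walk.cons (mSub_adj_inr_inl e _ (by simp)) SimpleGraph.Walk.nil, ?_⟩
    simp
  | succ j ih =>
    intro hj hj'
    obtain ⟨w, hw⟩ := ih (by omega) (by omega)
    refine ⟨SimpleGraph.Walk.cons (mSub_adj_inr_inr e _ ⟨m - 1 - j, by omega⟩ (by simp; omega)) w, ?_⟩
    simp [hw]

lemma mSub_inf_sup_walk (hm : 1 ≤ m) (e : T.edgeSet) :
    ∃ w : (mSubdivision T m).Walk (Sum.inl (Sym2.inf e.1)) (Sum.inl (Sym2.sup e.1)),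
      w.length = m + 1 := by
  obtain ⟨w, hw⟩ := mSub_gadget_walk (m := m) e (m - 1) (by omega) (by omega)
  refine ⟨SimpleGraph.Walk.cons (mSub_adj_inl_inr0 e _ (by simp)) w, ?_⟩
  simp only [SimpleGraph.Walk.length_cons, hw]
  omega

lemma mSub_edge_walk (hm : 1 ≤ m) {a b : V} (hab : T.Adj a b) :
    ∃ w : (mSubdivision T m).Walk (Sum.inl a) (Sum.inl b), w.length = m + 1 := by
  rcases le_total a b with h | h
  · obtain ⟨w, hw⟩ := mSub_inf_sup_walk hm ⟨s(a, b), hab⟩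
    have h1 : Sum.inl ((⟨s(a, b), hab⟩ : T.edgeSet) : Sym2 V).inf = (Sum.inl a : V ⊕ (T.edgeSet × Fin m)) := by
      rw [show ((⟨s(a, b), hab⟩ : T.edgeSet) : Sym2 V) = s(a, b) from rfl, Sym2.inf_mk,
        inf_eq_left.mpr h]
    have h2 : Sum.inl ((⟨s(a, b), hab⟩ : T.edgeSet) : Sym2 V).sup = (Sum.inl b : V ⊕ (T.edgeSet × Fin m)) := by
      rw [show ((⟨s(a, b), hab⟩ : T.edgeSet) : Sym2 V) = s(a, b) from rfl, Sym2.sup_mk,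
        sup_eq_right.mpr h]
    exact ⟨w.copy h1 h2, by rw [SimpleGraph.Walk.length_copy, hw]⟩
  · obtain ⟨w, hw⟩ := mSub_inf_sup_walk hm ⟨s(a, b), hab⟩
    have h1 : Sum.inl ((⟨s(a, b), hab⟩ : T.edgeSet) : Sym2 V).inf = (Sum.inl b : V ⊕ (T.edgeSet × Fin m)) := by
      rw [show ((⟨s(a, b), hab⟩ : T.edgeSet) : Sym2 V) = s(a, b) from rfl, Sym2.inf_mk,
        inf_eq_right.mpr h]
    have h2 : Sum.inl ((⟨s(a, b), hab⟩ : T.edgeSet) : Sym2 V).sup = (Sum.inl a : V ⊕ (T.edgeSet × Fin m)) := by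
      rw [show ((⟨s(a, b), hab⟩ : T.edgeSet) : Sym2 V) = s(a, b) from rfl, Sym2.sup_mk,
        sup_eq_left.mpr h]
    exact ⟨(w.copy h1 h2).reverse, by rw [SimpleGraph.Walk.length_reverse, SimpleGraph.Walk.length_copy, hw]⟩

end walks

section lower
variable {V : Type*} [LinearOrder V] {T : SimpleGraph V} {m : ℕ}

lemma adj_inf_sup (e : T.edgeSet) : T.Adj (Sym2.inf e.1) (Sym2.sup e.1) := by
  obtain ⟨e, he⟩ := e
  induction e using Sym2.ind with
  | _ a b =>
    rw [SimpleGraph.mem_edgeSet] at he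
    rcases le_total a b with h | h
    · simpa [Sym2.inf_mk, Sym2.sup_mk, inf_eq_left.mpr h, sup_eq_right.mpr h] using he
    · simpa [Sym2.inf_mk, Sym2.sup_mk, inf_eq_right.mpr h, sup_eq_left.mpr h] using he.symm

/-- The potential function measuring (m+1) times the distance from `u`. -/
noncomputable def pot (T : SimpleGraph V) (m : ℕ) (u : V) : (V ⊕ (T.edgeSet × Fin m)) → ℤ
  | Sum.inl w => ((m : ℤ) + 1) * (T.dist u w : ℤ)
  | Sum.inr (e, i) =>
      min (((m : ℤ) + 1) * (T.dist u (Sym2.inf e.1) : ℤ) + (i : ℤ) + 1)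
          (((m : ℤ) + 1) * (T.dist u (Sym2.sup e.1) : ℤ) + ((m : ℤ) - (i : ℤ)))

lemma pot_core1 (hc : T.Connected) (u : V) (e : T.edgeSet) (i : Fin m) (w : V)
    (h : (i.val = 0 ∧ w = Sym2.inf e.1) ∨ (i.val = m - 1 ∧ w = Sym2.sup e.1)) :
    |pot T m u (Sum.inl w) - pot T m u (Sum.inr (e, i))| ≤ 1 := by
  have hadj := adj_inf_sup e
  have hd1 : T.dist (Sym2.sup e.1) (Sym2.inf e.1) ≤ 1 := by
    simpa using SimpleGraph.dist_le (SimpleGraph.Walk.cons hadj.symm SimpleGraph.Walk.nil)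
  have hd2 : T.dist (Sym2.inf e.1) (Sym2.sup e.1) ≤ 1 := by
    simpa using SimpleGraph.dist_le (SimpleGraph.Walk.cons hadj SimpleGraph.Walk.nil)
  have h1 : T.dist u (Sym2.inf e.1) ≤ T.dist u (Sym2.sup e.1) + 1 :=
    le_trans (hc.dist_triangle (v := Sym2.sup e.1)) (by omega)
  have h2 : T.dist u (Sym2.sup e.1) ≤ T.dist u (Sym2.inf e.1) + 1 :=
    le_trans (hc.dist_triangle (v := Sym2.inf e.1)) (by omega)
  have hiv : (i : ℕ) < m := i.isLt
  set A := ((m : ℤ) + 1) * (T.dist u (Sym2.inf e.1) : ℤ) with hA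
  set B := ((m : ℤ) + 1) * (T.dist u (Sym2.sup e.1) : ℤ) with hB
  have key1 : A ≤ B + ((m : ℤ) + 1) := by
    rw [hA, hB]
    calc ((m : ℤ) + 1) * (T.dist u (Sym2.inf e.1) : ℤ)
        ≤ ((m : ℤ) + 1) * ((T.dist u (Sym2.sup e.1) : ℤ) + 1) := by
          apply mul_le_mul_of_nonneg_left _ (by positivity)
          exact_mod_cast h1
      _ = ((m : ℤ) + 1) * (T.dist u (Sym2.sup e.1) : ℤ) + ((m : ℤ) + 1) := by ring
  have key2 : B ≤ A + ((m : ℤ) + 1) := by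
    rw [hA, hB]
    calc ((m : ℤ) + 1) * (T.dist u (Sym2.sup e.1) : ℤ)
        ≤ ((m : ℤ) + 1) * ((T.dist u (Sym2.inf e.1) : ℤ) + 1) := by
          apply mul_le_mul_of_nonneg_left _ (by positivity)
          exact_mod_cast h2
      _ = ((m : ℤ) + 1) * (T.dist u (Sym2.inf e.1) : ℤ) + ((m : ℤ) + 1) := by ring
  clear_value A B
  rcases h with ⟨hi, rfl⟩ | ⟨hi, rfl⟩ <;>
    · simp only [pot, min_def]
      split_ifs <;> rw [abs_sub_le_iff] <;> constructor <;> omega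

lemma pot_core2 (u : V) (e : T.edgeSet) (i j : Fin m) (h : i.val + 1 = j.val) :
    |pot T m u (Sum.inr (e, i)) - pot T m u (Sum.inr (e, j))| ≤ 1 := by
  simp only [pot, min_def]
  have : ((i : ℕ) : ℤ) + 1 = ((j : ℕ) : ℤ) := by exact_mod_cast h
  split_ifs <;> rw [abs_sub_le_iff] <;> constructor <;> omega

end lower

section main
variable {V : Type*} [LinearOrder V] {T : SimpleGraph V} {m : ℕ}

lemma pot_lipschitz (hc : T.Connected) (u : V) {x y : V ⊕ (T.edgeSet × Fin m)}
    (h : (mSubdivision T m).Adj x y) : |pot T m u x - pot T m u y| ≤ 1 := by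
  rw [mSubdivision, SimpleGraph.fromRel_adj] at h
  obtain ⟨hne, h⟩ := h
  rcases x with w | ⟨e, i⟩ <;> rcases y with w' | ⟨e', j⟩
  · simp only at h; exact absurd h (by simp)
  · rcases h with h | h
    · exact pot_core1 hc u e' j w h
    · exact absurd h (by simp)
  · rw [abs_sub_comm]
    rcases h with h | h
    · exact absurd h (by simp)
    · exact pot_core1 hc u e i w' h
  · rcases h with ⟨rfl, h⟩ | ⟨rfl, h⟩
    · exact pot_core2 u _ i j h
    · rw [abs_sub_comm]; exact pot_core2 u _ j i h

lemma abs_pot_le_length {α : Type*} {G : SimpleGraph α} (f : α → ℤ)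
    (hf : ∀ {a b}, G.Adj a b → |f a - f b| ≤ 1) {x y : α} (w : G.Walk x y) :
    |f x - f y| ≤ (w.length : ℤ) := by
  induction w with
  | nil => simp
  | @cons a b c h p ih =>
    calc |f a - f c| ≤ |f a - f b| + |f b - f c| := abs_sub_le _ _ _
      _ ≤ 1 + p.length := add_le_add (hf h) ih
      _ = ((p.length + 1 : ℕ) : ℤ) := by push_cast; ring
      _ = _ := by simp

lemma mSub_walk_of_walk (hm : 1 ≤ m) {a b : V} (p : T.Walk a b) :
    ∃ w : (mSubdivision T m).Walk (Sum.inl a) (Sum.inl b), w.length = (m + 1) * p.length := by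
  induction p with
  | nil => exact ⟨SimpleGraph.Walk.nil, by simp⟩
  | cons h p ih =>
    obtain ⟨w1, hw1⟩ := mSub_edge_walk hm h
    obtain ⟨w2, hw2⟩ := ih
    exact ⟨w1.append w2, by simp [hw1, hw2]; ring⟩

end main

theorem dist_mSubdivision {V : Type*} [Fintype V] [LinearOrder V] [Nonempty V]
    (T : SimpleGraph V) (hT : T.IsTree) (m : ℕ) (hm : 1 ≤ m) (u v : V) :
    (mSubdivision T m).dist (Sum.inl u) (Sum.inl v) = (m + 1) * T.dist u v := by
  have hc : T.Connected := hT.isConnected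
  obtain ⟨p, hp⟩ := hc.exists_walk_length_eq_dist u v
  obtain ⟨w, hw⟩ := mSub_walk_of_walk hm p
  have hub : (mSubdivision T m).dist (Sum.inl u) (Sum.inl v) ≤ (m + 1) * T.dist u v := by
    have := SimpleGraph.dist_le w
    rwa [hw, hp] at this
  have hreach : (mSubdivision T m).Reachable (Sum.inl u) (Sum.inl v) := ⟨w⟩
  obtain ⟨q, hq⟩ := hreach.exists_walk_length_eq_dist
  have hlb := abs_pot_le_length (pot T m u) (fun h => pot_lipschitz hc u h) q
  have hpu : pot T m u (Sum.inl u) = 0 := by simp [pot]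
  have hpv : pot T m u (Sum.inl v) = ((m : ℤ) + 1) * (T.dist u v : ℤ) := rfl
  rw [hpu, hpv, hq, abs_sub_comm, sub_zero] at hlb
  have hnn : (0 : ℤ) ≤ ((m : ℤ) + 1) * (T.dist u v : ℤ) := by positivity
  rw [abs_of_nonneg hnn] at hlb
  have hlb' : (m + 1) * T.dist u v ≤ (mSubdivision T m).dist (Sum.inl u) (Sum.inl v) := by
    exact_mod_cast hlb
  exact le_antisymm hub hlb'
end

section
/- Let T be a tree on a finite, nonempty, linearly ordered vertex type V, let m ≥ 1 be an integer, and let S be the m-order subdivision of T. Then for every edge e of T, the distance in S between two inserted vertices on e satisfies dist_S(inr(e,i), inr(e,j)) = |i − j| for all i, j in Fin m, and consequently half the sum over all ordered pairs (i,j) in Fin m × Fin m of dist_S(inr(e,i), inr(e,j)) equals C(m+1,3) = (m+1)m(m−1)/6. -/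
private lemma sym2_mk_inf_sup {α : Type*} [LinearOrder α] (s : Sym2 α) :
    s(Sym2.inf s, Sym2.sup s) = s := by
  induction s using Sym2.ind with
  | _ a b =>
    rcases le_total a b with h | h
    · simp [Sym2.inf_mk, Sym2.sup_mk, inf_eq_left.mpr h, sup_eq_right.mpr h]
    · rw [Sym2.inf_mk, Sym2.sup_mk, inf_eq_right.mpr h, sup_eq_left.mpr h, Sym2.eq_swap]

private lemma walk_lipschitz {α : Type*} {G : SimpleGraph α} (f : α → ℤ)
    (hf : ∀ {x y}, G.Adj x y → |f x - f y| ≤ 1) {x y : α} (p : G.Walk x y) :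
    |f x - f y| ≤ (p.length : ℤ) := by
  induction p with
  | nil => simp
  | cons h p ih =>
    have h1 := hf h
    calc |f _ - f _| ≤ |f _ - f _| + |f _ - f _| := abs_sub_le _ _ _
    _ ≤ 1 + p.length := add_le_add h1 ih
    _ = _ := by push_cast [SimpleGraph.Walk.length_cons]; ring

private lemma sum_range_cast_q (n : ℕ) :
    ∑ i ∈ Finset.range n, (i : ℚ) = n * (n - 1) / 2 := by
  induction n with
  | zero => simp
  | succ n ih =>
    rw [Finset.sum_range_succ, ih]
    push_cast
    ring

private lemma sum_abs_sub_q (m : ℕ) :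
    ∑ i ∈ Finset.range m, ∑ j ∈ Finset.range m, |(i : ℚ) - (j : ℚ)| =
      ((m : ℚ) + 1) * m * ((m : ℚ) - 1) / 3 := by
  induction m with
  | zero => simp
  | succ n ih =>
    have hb : ∀ k ∈ Finset.range n, |(k : ℚ) - (n : ℚ)| = (n : ℚ) - k := by
      intro k hk
      rw [Finset.mem_range] at hk
      rw [abs_sub_comm, abs_of_nonneg]
      have : (k : ℚ) < n := by exact_mod_cast hk
      linarith
    have hb2 : ∀ k ∈ Finset.range n, |(n : ℚ) - (k : ℚ)| = (n : ℚ) - k := by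
      intro k hk
      rw [Finset.mem_range] at hk
      have : (k : ℚ) < n := by exact_mod_cast hk
      exact abs_of_nonneg (by linarith)
    have hsum : ∑ k ∈ Finset.range n, ((n : ℚ) - k) = n * n - n * (n - 1) / 2 := by
      rw [Finset.sum_sub_distrib, Finset.sum_const, Finset.card_range, sum_range_cast_q]
      ring
    have expand : ∑ i ∈ Finset.range (n + 1), ∑ j ∈ Finset.range (n + 1), |(i : ℚ) - (j : ℚ)|
        = (∑ i ∈ Finset.range n, ∑ j ∈ Finset.range n, |(i : ℚ) - (j : ℚ)|)
          + (∑ i ∈ Finset.range n, |(i : ℚ) - (n : ℚ)|)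
          + ((∑ j ∈ Finset.range n, |(n : ℚ) - (j : ℚ)|) + |(n : ℚ) - (n : ℚ)|) := by
      rw [Finset.sum_range_succ]
      simp only [Finset.sum_range_succ]
      rw [Finset.sum_add_distrib]
    rw [expand, ih, Finset.sum_congr rfl hb, Finset.sum_congr rfl hb2, hsum, sub_self,
      abs_zero]
    push_cast
    ring

theorem dist_mSubdivision_inserted {V : Type*} [Fintype V] [LinearOrder V] [Nonempty V]
    (T : SimpleGraph V) (hT : T.IsTree) (m : ℕ) (hm : 1 ≤ m) (e : T.edgeSet) :
    (∀ i j : Fin m,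
        ((mSubdivision T m).dist (Sum.inr (e, i)) (Sum.inr (e, j)) : ℤ) =
          |(i : ℤ) - (j : ℤ)|) ∧
      (∑ i : Fin m, ∑ j : Fin m,
          ((mSubdivision T m).dist (Sum.inr (e, i)) (Sum.inr (e, j)) : ℚ)) / 2 =
        ((m : ℚ) + 1) * (m : ℚ) * ((m : ℚ) - 1) / 6 := by
  classical
  set G := mSubdivision T m with hG
  -- adjacency of consecutive inserted vertices
  have hadj : ∀ i j : Fin m, (i : ℕ) + 1 = (j : ℕ) →
      G.Adj (Sum.inr (e, i)) (Sum.inr (e, j)) := by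
    intro i j hij
    rw [hG, mSubdivision, SimpleGraph.fromRel_adj]
    refine ⟨?_, Or.inl ⟨rfl, hij⟩⟩
    intro hcon
    have h2 : (e, i) = (e, j) := Sum.inr.inj hcon
    have : i = j := (Prod.mk.injEq _ _ _ _ ▸ h2).2
    omega
  -- upper bound: walk along the edge
  have walkex : ∀ (d : ℕ) (i j : Fin m), (i : ℕ) + d = (j : ℕ) →
      ∃ p : G.Walk (Sum.inr (e, i)) (Sum.inr (e, j)), p.length = d := by
    intro d
    induction d with
    | zero =>
      intro i j hij
      have : i = j := Fin.ext (by omega)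
      subst this
      exact ⟨SimpleGraph.Walk.nil, rfl⟩
    | succ d ih =>
      intro i j hij
      have hi1 : (i : ℕ) + 1 < m := by have := j.isLt; omega
      set i' : Fin m := ⟨(i : ℕ) + 1, hi1⟩ with hi'
      obtain ⟨p, hp⟩ := ih i' j (by simp [hi']; omega)
      exact ⟨SimpleGraph.Walk.cons (hadj i i' rfl) p, by simp [hp]⟩
  have hub : ∀ i j : Fin m, (i : ℕ) ≤ (j : ℕ) →
      G.dist (Sum.inr (e, i)) (Sum.inr (e, j)) ≤ (j : ℕ) - (i : ℕ) := by
    intro i j hij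
    obtain ⟨p, hp⟩ := walkex ((j : ℕ) - (i : ℕ)) i j (by omega)
    exact hp ▸ SimpleGraph.dist_le p
  -- lower bound via a Lipschitz potential
  set A := T \ SimpleGraph.fromEdgeSet {e.1} with hA
  have hbridge : T.IsBridge e.1 :=
    (SimpleGraph.isAcyclic_iff_forall_edge_isBridge.mp hT.2) e.2
  have hb' : T.IsBridge s(Sym2.inf e.1, Sym2.sup e.1) := by
    rw [sym2_mk_inf_sup]; exact hbridge
  have hsetseq : ({s(Sym2.inf e.1, Sym2.sup e.1)} : Set (Sym2 V)) = {e.1} := by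
    rw [sym2_mk_inf_sup]
  have hnr : ¬ A.Reachable (Sym2.inf e.1) (Sym2.sup e.1) := by
    rw [hA, ← hsetseq]
    exact SimpleGraph.isBridge_iff.mp hb'
  set ψ : V → ℤ := fun u => if A.Reachable (Sym2.inf e.1) u then 0 else (m : ℤ) + 1 with hψ
  have hψinf : ψ (Sym2.inf e.1) = 0 := by
    rw [hψ]; exact if_pos (SimpleGraph.Reachable.refl _)
  have hψsup : ψ (Sym2.sup e.1) = (m : ℤ) + 1 := by
    rw [hψ]; exact if_neg hnr
  have hsame : ∀ e' : T.edgeSet, e' ≠ e → ψ (Sym2.sup e'.1) = ψ (Sym2.inf e'.1) := by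
    intro e' hne
    have hne1 : e'.1 ≠ e.1 := fun h => hne (Subtype.ext h)
    have hAadj : A.Adj (Sym2.inf e'.1) (Sym2.sup e'.1) := by
      rw [hA, SimpleGraph.sdiff_adj]
      constructor
      · rw [← SimpleGraph.mem_edgeSet, sym2_mk_inf_sup]; exact e'.2
      · rw [SimpleGraph.fromEdgeSet_adj]
        rintro ⟨hmem, -⟩
        rw [Set.mem_singleton_iff, sym2_mk_inf_sup] at hmem
        exact hne1 hmem
    rw [hψ]
    exact if_congr
      ⟨fun h => h.trans hAadj.symm.reachable, fun h => h.trans hAadj.reachable⟩ rfl rfl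
  set φ : (V ⊕ (T.edgeSet × Fin m)) → ℤ := fun x =>
    match x with
    | Sum.inl u => ψ u
    | Sum.inr (e', k) => if e' = e then (k : ℤ) + 1 else ψ (Sym2.inf e'.1) with hφ
  have hφr : ∀ (e' : T.edgeSet) (k : Fin m),
      φ (Sum.inr (e', k)) = if e' = e then (k : ℤ) + 1 else ψ (Sym2.inf e'.1) := by
    intro e' k; rw [hφ]
  have hφl : ∀ u : V, φ (Sum.inl u) = ψ u := by intro u; rw [hφ]
  have hlip : ∀ {x y}, G.Adj x y → |φ x - φ y| ≤ 1 := by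
    have key : ∀ x y,
        (match x, y with
          | Sum.inl u, Sum.inr (e', i) =>
              (i.val = 0 ∧ u = Sym2.inf e'.1) ∨ (i.val = m - 1 ∧ u = Sym2.sup e'.1)
          | Sum.inr (e', i), Sum.inr (e'', j) => e' = e'' ∧ i.val + 1 = j.val
          | _, _ => False) → |φ x - φ y| ≤ 1 := by
      rintro (u | ⟨e', k⟩) (v | ⟨e'', k'⟩) h
      · exact absurd h not_false
      · -- inl u ~ inr (e'', k')
        rw [hφl, hφr]
        by_cases hee : e'' = e
        · subst hee
          rcases h with ⟨hk, hu⟩ | ⟨hk, hu⟩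
          · subst hu
            rw [hψinf, if_pos rfl, abs_sub_le_iff]
            omega
          · subst hu
            rw [hψsup, if_pos rfl, abs_sub_le_iff]
            omega
        · rcases h with ⟨hk, hu⟩ | ⟨hk, hu⟩
          · subst hu
            rw [if_neg hee]
            simp
          · subst hu
            rw [if_neg hee, hsame e'' hee]
            simp
      · exact absurd h not_false
      · obtain ⟨rfl, hk⟩ := h
        rw [hφr, hφr]
        by_cases hee : e' = e
        · rw [if_pos hee, if_pos hee, abs_sub_le_iff]; omega
        · rw [if_neg hee, if_neg hee]; simp
    intro x y hxy
    rw [hG, mSubdivision, SimpleGraph.fromRel_adj] at hxy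
    rcases hxy with ⟨-, h | h⟩
    · exact key x y h
    · rw [abs_sub_comm]; exact key y x h
  have hlb : ∀ i j : Fin m, (i : ℕ) ≤ (j : ℕ) →
      ((j : ℤ) - (i : ℤ)) ≤ (G.dist (Sum.inr (e, i)) (Sum.inr (e, j)) : ℤ) := by
    intro i j hij
    obtain ⟨p, -⟩ := walkex ((j : ℕ) - (i : ℕ)) i j (by omega)
    obtain ⟨q, hq⟩ := p.reachable.exists_walk_length_eq_dist
    have hl := walk_lipschitz φ hlip q
    rw [hq, hφr, hφr, if_pos rfl, if_pos rfl] at hl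
    calc (j : ℤ) - (i : ℤ) ≤ |((i : ℤ) + 1) - ((j : ℤ) + 1)| := by
          rw [abs_sub_comm]; exact le_abs_self _ |>.trans (le_of_eq (by ring_nf))
    _ ≤ _ := hl
  have key2 : ∀ i j : Fin m, (i : ℕ) ≤ (j : ℕ) →
      (G.dist (Sum.inr (e, i)) (Sum.inr (e, j)) : ℤ) = |(i : ℤ) - (j : ℤ)| := by
    intro i j hij
    have h1 := hlb i j hij
    have h2 := hub i j hij
    have habs : |(i : ℤ) - (j : ℤ)| = (j : ℤ) - (i : ℤ) := by
      rw [abs_sub_comm]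
      exact abs_of_nonneg (by omega)
    rw [habs]
    omega
  have part1 : ∀ i j : Fin m,
      (G.dist (Sum.inr (e, i)) (Sum.inr (e, j)) : ℤ) = |(i : ℤ) - (j : ℤ)| := by
    intro i j
    rcases le_total (i : ℕ) (j : ℕ) with h | h
    · exact key2 i j h
    · rw [SimpleGraph.dist_comm, abs_sub_comm]
      exact key2 j i h
  refine ⟨part1, ?_⟩
  have hcast : ∀ i j : Fin m,
      (G.dist (Sum.inr (e, i)) (Sum.inr (e, j)) : ℚ) =
        |((i : ℕ) : ℚ) - ((j : ℕ) : ℚ)| := by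
    intro i j
    have h2 : ((G.dist (Sum.inr (e, i)) (Sum.inr (e, j)) : ℤ) : ℚ) =
        (|(i : ℤ) - (j : ℤ)| : ℚ) := by exact_mod_cast part1 i j
    push_cast at h2
    exact_mod_cast h2
  have hsum2 : (∑ i : Fin m, ∑ j : Fin m,
      (G.dist (Sum.inr (e, i)) (Sum.inr (e, j)) : ℚ)) =
      ∑ i ∈ Finset.range m, ∑ j ∈ Finset.range m, |(i : ℚ) - (j : ℚ)| := by
    rw [← Fin.sum_univ_eq_sum_range (fun i => ∑ j ∈ Finset.range m, |(i : ℚ) - (j : ℚ)|) m]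
    refine Finset.sum_congr rfl fun i _ => ?_
    rw [← Fin.sum_univ_eq_sum_range (fun j => |((i : ℕ) : ℚ) - (j : ℚ)|) m]
    exact Finset.sum_congr rfl fun j _ => hcast i j
  rw [hsum2, sum_abs_sub_q]
  ring
end
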